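/- arXiv:2005.04252 — 9 statements merged into one kernel-verified Lean document; each statement's English description precedes it below -/
import Mathlib

section
/- Let M be a matroid on a finite ground set E and let ℓ : E → ℝ be generic. Enumerate the bases of M as B₁, …, Bₙ so that ℓ(B₁) < ℓ(B₂) < … < ℓ(Bₙ). Then this enumeration is a shelling order of the independence complex I(M): for all 1 ≤ i < j ≤ n there exists k < j with B_i ∩ B_j ⊆ B_k ∩ B_j and |B_k ∩ B_j| = |B_j| − 1. (Theorem 1.2, part A: ordering the bases by ℓ-weight is a line shelling of I(M).) -/
/-!
STATEMENT 0 (Theorem 1.2, part A): ordering the bases of a matroid on a finite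
ground set by increasing weight of a generic function `ℓ` is a shelling order of
the independence complex.
-/

open scoped BigOperators

/-- The `ℓ`-weight of a set `A ⊆ E`: the sum of the values of `ℓ` on `A`. -/
noncomputable def wt {α : Type*} (ℓ : α → ℝ) (A : Set α) : ℝ := ∑ᶠ e ∈ A, ℓ e

/-- `ℓ` is generic for `M` if it is injective on the ground set and distinct
bases have distinct `ℓ`-weights. -/
def Generic {α : Type*} (M : Matroid α) (ℓ : α → ℝ) : Prop :=
  Function.Injective ℓ ∧
    ∀ ⦃B B' : Set α⦄, M.IsBase B → M.IsBase B' → B ≠ B' → wt ℓ B ≠ wt ℓ B'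

/-- `F 0, …, F (n-1)` is a shelling order: for all `i < j` there is `k < j` with
`F i ∩ F j ⊆ F k ∩ F j` and `|F k ∩ F j| = |F j| - 1`. -/
def IsShelling {α : Type*} {n : ℕ} (F : Fin n → Set α) : Prop :=
  ∀ i j : Fin n, i < j → ∃ k : Fin n, k < j ∧ F i ∩ F j ⊆ F k ∩ F j ∧
    (F k ∩ F j).ncard = (F j).ncard - 1

/-- `B` enumerates (without repetition) all the bases of `M`. -/
def EnumeratesBases {α : Type*} (M : Matroid α) {n : ℕ} (B : Fin n → Set α) : Prop :=
  Function.Injective B ∧ (∀ i, M.IsBase (B i)) ∧ ∀ C, M.IsBase C → ∃ i, B i = C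

section Aux

open Set

variable {α : Type*} [Fintype α] {M : Matroid α}

lemma wt_insert {ℓ : α → ℝ} {a : α} {s : Set α} (h : a ∉ s) :
    wt ℓ (insert a s) = ℓ a + wt ℓ s := by
  simpa [wt] using finsum_mem_insert ℓ h (Set.toFinite s)

lemma wt_eq_add_diff {ℓ : α → ℝ} {a : α} {s : Set α} (h : a ∈ s) :
    wt ℓ s = ℓ a + wt ℓ (s \ {a}) := by
  rw [← wt_insert (show a ∉ s \ {a} by simp), Set.insert_diff_singleton,
    Set.insert_eq_of_mem h]

lemma wt_union {ℓ : α → ℝ} {s t : Set α} (h : Disjoint s t) :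
    wt ℓ (s ∪ t) = wt ℓ s + wt ℓ t := by
  simpa [wt] using finsum_mem_union h (Set.toFinite s) (Set.toFinite t)

lemma wt_split (ℓ : α → ℝ) (s t : Set α) :
    wt ℓ s = wt ℓ (s ∩ t) + wt ℓ (s \ t) := by
  rw [← wt_union (Set.disjoint_of_subset_left Set.inter_subset_right Set.disjoint_sdiff_right),
    Set.inter_union_diff]

/-- An independent set with at least as many elements as a base is a base. -/
lemma indep_base_of_encard_le {I B : Set α} (hI : M.Indep I) (hB : M.IsBase B)
    (h : B.encard ≤ I.encard) : M.IsBase I := by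
  obtain ⟨B', hB', hIB'⟩ := hI.exists_isBase_superset
  have hcard : B'.encard ≤ I.encard := (hB'.encard_eq_encard_of_isBase hB) ▸ h
  rwa [(Set.toFinite B').eq_of_subset_of_encard_le' hIB' hcard]

/-- If `I` is independent, `J` independent, and `I ⊆ closure J`, then `|I| ≤ |J|`. -/
lemma indep_encard_le_of_subset_closure {I J : Set α} (hI : M.Indep I) (hJ : M.Indep J)
    (h : I ⊆ M.closure J) : I.encard ≤ J.encard := by
  obtain ⟨I', hI', hII'⟩ := hI.subset_isBasis_of_subset h (M.closure_subset_ground J)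
  have hJb : M.IsBasis J (M.closure J) := hJ.isBasis_closure
  calc I.encard ≤ I'.encard := Set.encard_mono hII'
    _ = J.encard := hI'.encard_eq_encard hJb

/-- The fundamental-circuit lemma: if `B` is a base and `f ∉ B` is in the ground set,
then `f` is in the closure of the set of elements `e ∈ B` such that `B - e + f` is a base. -/
lemma mem_closure_exchange_set {B : Set α} (hB : M.IsBase B) {f : α} (hfE : f ∈ M.E)
    (hf : f ∉ B) : f ∈ M.closure {e ∈ B | M.IsBase (insert f (B \ {e}))} := by
  classical
  set P : Finset α → Prop := fun I => ↑I ⊆ B ∧ f ∈ M.closure ↑I with hP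
  have hPB : P (Set.toFinite B).toFinset := by
    constructor
    · rw [Set.Finite.coe_toFinset]
    · rw [Set.Finite.coe_toFinset, hB.closure_eq]; exact hfE
  obtain ⟨I, hImem, hImin⟩ := Finset.exists_min_image
    (Finset.univ.filter P) Finset.card
    ⟨(Set.toFinite B).toFinset, Finset.mem_filter.mpr ⟨Finset.mem_univ _, hPB⟩⟩
  simp only [Finset.mem_filter, Finset.mem_univ, true_and] at hImem
  obtain ⟨hIB, hfI⟩ := hImem
  have hIindep : M.Indep (↑I : Set α) := hB.indep.subset hIB
  -- every element of I gives an exchange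
  have key : ∀ e ∈ (↑I : Set α), M.IsBase (insert f (B \ {e})) := by
    intro e heI
    have heB : e ∈ B := hIB heI
    have hfIe : f ∉ M.closure (↑(I.erase e) : Set α) := by
      intro hcon
      have hsub' : (↑(I.erase e) : Set α) ⊆ (↑I : Set α) := by
        rw [Finset.coe_erase]; exact Set.diff_subset
      have hPer : P (I.erase e) := ⟨hsub'.trans hIB, hcon⟩
      have := hImin (I.erase e) (Finset.mem_filter.mpr ⟨Finset.mem_univ _, hPer⟩)
      have hlt : (I.erase e).card < I.card := Finset.card_erase_lt_of_mem heI
      omega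
    have hIe : (↑(I.erase e) : Set α) = (↑I : Set α) \ {e} := by
      simp [Finset.coe_erase]
    rw [hIe] at hfIe
    -- exchange: e ∈ closure (insert f (I \ {e}))
    have hex : e ∈ M.closure (insert f ((↑I : Set α) \ {e})) \ M.closure ((↑I : Set α) \ {e}) := by
      refine Matroid.closure_exchange ⟨?_, hfIe⟩
      rwa [Set.insert_diff_singleton, Set.insert_eq_of_mem heI]
    -- f not in closure of B \ {e}
    have hfBe : f ∉ M.closure (B \ {e}) := by
      intro hcon
      have h1 : M.closure (insert f ((↑I : Set α) \ {e})) ⊆ M.closure (insert f (B \ {e})) :=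
        M.closure_subset_closure (Set.insert_subset_insert (Set.diff_subset_diff_left hIB))
      have h2 : M.closure (insert f (B \ {e})) = M.closure (B \ {e}) :=
        Matroid.closure_insert_eq_of_mem_closure hcon
      have : e ∈ M.closure (B \ {e}) := h2 ▸ h1 hex.1
      exact hB.indep.notMem_closure_sdiff_of_mem heB this
    have hBe : M.Indep (B \ {e}) := hB.indep.subset Set.diff_subset
    have hfBnot : f ∉ B \ {e} := fun h => hf h.1
    have hind : M.Indep (insert f (B \ {e})) :=
      ((hBe.notMem_closure_iff hfE).mp hfBe).1
    refine indep_base_of_encard_le hind hB ?_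
    rw [Set.encard_insert_of_notMem hfBnot, Set.encard_sdiff_singleton_add_one heB]
  have hsub : (↑I : Set α) ⊆ {e ∈ B | M.IsBase (insert f (B \ {e}))} :=
    fun e he => ⟨hIB he, key e he⟩
  exact M.closure_subset_closure hsub hfI

/-- Key exchange lemma: if `A`, `B` are bases with `wt ℓ A < wt ℓ B`, then there are
`e ∈ B \ A` and `f ∈ A \ B` with `B - e + f` a base and `ℓ f < ℓ e`. -/
lemma exists_good_exchange (hE : M.E = Set.univ) {ℓ : α → ℝ} {A B : Set α}
    (hA : M.IsBase A) (hB : M.IsBase B) (hw : wt ℓ A < wt ℓ B) :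
    ∃ e ∈ B \ A, ∃ f ∈ A \ B, M.IsBase (insert f (B \ {e})) ∧ ℓ f < ℓ e := by
  classical
  set D : Finset α := (Set.toFinite (A \ B)).toFinset with hD
  set ι := {x : α // x ∈ D} with hι
  have hDmem : ∀ x : ι, (x : α) ∈ A \ B := fun x =>
    (Set.Finite.mem_toFinset _).mp x.2
  set t : ι → Finset α := fun f =>
    Finset.univ.filter (fun e => e ∈ B \ A ∧ M.IsBase (insert (f : α) (B \ {e}))) with ht
  have htmem : ∀ (f : ι) (e : α), e ∈ t f ↔ e ∈ B \ A ∧ M.IsBase (insert (f : α) (B \ {e})) := by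
    intro f e; simp [ht]
  -- Hall's condition
  have hall : ∀ s : Finset ι, s.card ≤ (s.biUnion t).card := by
    intro s
    set T : Set α := Subtype.val '' (↑s : Set ι) with hT
    set N : Set α := ↑(s.biUnion t) with hN
    have hTsub : T ⊆ A \ B := by rintro x ⟨y, _, rfl⟩; exact hDmem y
    have hNsub : N ⊆ B \ A := by
      intro e he
      rw [hN, Finset.mem_coe, Finset.mem_biUnion] at he
      obtain ⟨f, -, hf⟩ := he
      exact ((htmem f e).mp hf).1
    -- T ⊆ closure ((A ∩ B) ∪ N)
    have hTcl : T ⊆ M.closure ((A ∩ B) ∪ N) := by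
      rintro x ⟨y, hy, rfl⟩
      have h1 := mem_closure_exchange_set hB (by rw [hE]; trivial) (hDmem y).2
      refine M.closure_subset_closure ?_ h1
      rintro e ⟨heB, hbase⟩
      by_cases heA : e ∈ A
      · exact Or.inl ⟨heA, heB⟩
      · refine Or.inr ?_
        rw [hN, Finset.coe_biUnion]
        refine Set.mem_biUnion hy ?_
        simp only [Finset.mem_coe]
        exact (htmem y e).mpr ⟨⟨heB, heA⟩, hbase⟩
    have hIind : M.Indep ((A ∩ B) ∪ T) :=
      hA.indep.subset (Set.union_subset Set.inter_subset_left (hTsub.trans Set.diff_subset))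
    have hJind : M.Indep ((A ∩ B) ∪ N) :=
      hB.indep.subset (Set.union_subset Set.inter_subset_right (hNsub.trans Set.diff_subset))
    have hIcl : (A ∩ B) ∪ T ⊆ M.closure ((A ∩ B) ∪ N) :=
      Set.union_subset (Set.Subset.trans Set.subset_union_left
        (M.subset_closure _ (by rw [hE]; exact Set.subset_univ _))) hTcl
    have hle : ((A ∩ B) ∪ T).encard ≤ ((A ∩ B) ∪ N).encard :=
      indep_encard_le_of_subset_closure hIind hJind hIcl
    have hdT : Disjoint (A ∩ B) T :=
      Set.disjoint_of_subset_right hTsub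
        (Set.disjoint_of_subset_left Set.inter_subset_right Set.disjoint_sdiff_right)
    have hdN : Disjoint (A ∩ B) N :=
      Set.disjoint_of_subset_right hNsub
        (Set.disjoint_of_subset_left Set.inter_subset_left Set.disjoint_sdiff_right)
    rw [Set.encard_union_eq hdT, Set.encard_union_eq hdN] at hle
    have hfin : (A ∩ B).encard ≠ ⊤ := (Set.toFinite _).encard_lt_top.ne
    have hTN : T.encard ≤ N.encard := WithTop.le_of_add_le_add_left hfin hle
    have hTcard : T.encard = s.card := by
      rw [hT, Subtype.val_injective.encard_image _,
        Set.encard_coe_eq_coe_finsetCard]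
    have hNcard : N.encard = (s.biUnion t).card := by
      rw [hN, Set.encard_coe_eq_coe_finsetCard]
    rw [hTcard, hNcard] at hTN
    exact_mod_cast hTN
  obtain ⟨σ, hσinj, hσmem⟩ := (Finset.all_card_le_biUnion_card_iff_exists_injective t).mp hall
  -- range of σ is all of B \ A
  have hrange_sub : Set.range σ ⊆ B \ A := fun e ⟨f, hf⟩ => hf ▸ ((htmem f (σ f)).mp (hσmem f)).1
  have hcard_range : (Set.range σ).encard = (B \ A).encard := by
    have h1 : (Set.range σ).encard = (Set.univ : Set ι).encard := by
      rw [← Set.image_univ, hσinj.encard_image _]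
    have hAD : (A \ B).encard = (D.card : ℕ∞) := by
      rw [hD, ← Set.encard_coe_eq_coe_finsetCard, Set.Finite.coe_toFinset]
    have h2 : (Set.univ : Set ι).encard = (A \ B).encard := by
      rw [Set.encard_univ, hAD, ENat.card_eq_coe_fintype_card, Fintype.card_coe]
    rw [h1, h2, hA.encard_sdiff_comm hB]
  have hrange : Set.range σ = B \ A :=
    (Set.toFinite (B \ A)).eq_of_subset_of_encard_le' hrange_sub hcard_range.ge
  -- now compare weights
  have hwAB : wt ℓ (A \ B) < wt ℓ (B \ A) := by
    have h1 := wt_split ℓ A B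
    have h2 := wt_split ℓ B A
    rw [Set.inter_comm B A] at h2
    linarith
  have hsum1 : ∑ f : ι, ℓ (f : α) = wt ℓ (A \ B) := by
    rw [wt, ← Set.Finite.coe_toFinset (Set.toFinite (A \ B)), finsum_mem_coe_finset, ← hD]
    exact Finset.sum_coe_sort D ℓ
  have hsum2 : ∑ f : ι, ℓ (σ f) = wt ℓ (B \ A) := by
    have himg : Finset.univ.image σ = (Set.toFinite (B \ A)).toFinset := by
      apply Finset.coe_injective
      rw [Finset.coe_image, Finset.coe_univ, Set.image_univ, hrange,
        Set.Finite.coe_toFinset]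
    rw [wt, ← Set.Finite.coe_toFinset (Set.toFinite (B \ A)), finsum_mem_coe_finset, ← himg,
      Finset.sum_image (fun x _ y _ h => hσinj h)]
  -- some f must strictly gain
  have : ∃ f : ι, ℓ (f : α) < ℓ (σ f) := by
    by_contra hcon
    push_neg at hcon
    have : ∑ f : ι, ℓ (σ f) ≤ ∑ f : ι, ℓ (f : α) :=
      Finset.sum_le_sum (fun f _ => hcon f)
    rw [hsum1, hsum2] at this
    linarith
  obtain ⟨f, hf⟩ := this
  obtain ⟨hσfBA, hbase⟩ := (htmem f (σ f)).mp (hσmem f)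
  exact ⟨σ f, hσfBA, f, hDmem f, hbase, hf⟩

end Aux

theorem weight_order_is_shelling {α : Type*} [Fintype α]
    (M : Matroid α) (hE : M.E = Set.univ)
    (ℓ : α → ℝ) (hgen : Generic M ℓ)
    {n : ℕ} (B : Fin n → Set α) (hB : EnumeratesBases M B)
    (hsort : ∀ i j : Fin n, i < j → wt ℓ (B i) < wt ℓ (B j)) :
    IsShelling B := by
  obtain ⟨hBinj, hBbase, hBsurj⟩ := hB
  intro i j hij
  have hw : wt ℓ (B i) < wt ℓ (B j) := hsort i j hij
  obtain ⟨e, he, f, hfm, hbase, hlf⟩ :=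
    exists_good_exchange hE (hBbase i) (hBbase j) hw
  obtain ⟨k, hk⟩ := hBsurj _ hbase
  have hfBj : f ∉ B j := hfm.2
  have heBj : e ∈ B j := he.1
  -- wt (B k) < wt (B j)
  have hwk : wt ℓ (B k) < wt ℓ (B j) := by
    rw [hk, wt_insert (show f ∉ B j \ {e} from fun h => hfBj h.1)]
    rw [wt_eq_add_diff heBj]
    linarith
  have hkj : k < j := by
    rcases lt_trichotomy k j with h | h | h
    · exact h
    · exact absurd hwk (by rw [h]; exact lt_irrefl _)
    · exact absurd (hsort j k h) (by linarith)
  refine ⟨k, hkj, ?_, ?_⟩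
  · -- B i ∩ B j ⊆ B k ∩ B j
    intro x hx
    refine ⟨?_, hx.2⟩
    rw [hk]
    by_cases hxe : x = e
    · exact absurd (hxe ▸ hx.1) he.2
    · exact Set.mem_insert_of_mem _ ⟨hx.2, hxe⟩
  · -- cardinality
    have hBkBj : B k ∩ B j = B j \ {e} := by
      rw [hk]
      ext x
      simp only [Set.mem_inter_iff, Set.mem_insert_iff, Set.mem_diff, Set.mem_singleton_iff]
      constructor
      · rintro ⟨hx1 | hx1, hx2⟩
        · exact absurd (hx1 ▸ hx2) hfBj
        · exact ⟨hx2, hx1.2⟩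
      · rintro ⟨hx1, hx2⟩
        exact ⟨Or.inr ⟨hx1, hx2⟩, hx1⟩
    rw [hBkBj, Set.ncard_sdiff_singleton_of_mem heBj]
end

section
/- Let M be a matroid on a finite ground set E and let ℓ : E → ℝ be generic, with <_ℓ the induced linear order on E. Then for every basis B of M and every subset S ⊆ B, the following are equivalent: (i) there exists a basis B' of M with ℓ(B') < ℓ(B) and S ⊆ B'; (ii) IP_{<_ℓ}(B) is not a subset of S. Consequently, in the shelling order of I(M) obtained by increasing ℓ-weight, the restriction set of each basis B equals its internally passive set IP_{<_ℓ}(B). (Theorem 1.2, part B.) -/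
/-!
STATEMENT 1 (Theorem 1.2, part B): for a generic `ℓ`, a basis `B` and `S ⊆ B`,
there is a lighter basis containing `S` iff `IP_{<ℓ}(B) ⊄ S`; consequently, in
the shelling of `I(M)` by increasing `ℓ`-weight, the restriction set of each
basis equals its internally passive set for the order induced by `ℓ`.
-/

open scoped BigOperators

/-- The internally passive set of a basis `B` with respect to a strict order
`lt` on the ground set: elements `b ∈ B` for which some `b' ∉ B` with
`lt b' b` satisfies that `(B \ {b}) ∪ {b'}` is a basis. -/
def IP {α : Type*} (M : Matroid α) (lt : α → α → Prop) (B : Set α) : Set α :=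
  {b | b ∈ B ∧ ∃ b', b' ∉ B ∧ lt b' b ∧ M.IsBase (insert b' (B \ {b}))}

/-- The restriction set of the facet `F j` in the enumeration `F`. -/
def restrictionSet {α : Type*} {n : ℕ} (F : Fin n → Set α) (j : Fin n) : Set α :=
  {x | x ∈ F j ∧ ∃ i : Fin n, i < j ∧ F j \ {x} ⊆ F i}

open Classical in
lemma wt_eq {α : Type*} [Fintype α] (ℓ : α → ℝ) (A : Set α) :
    wt ℓ A = ∑ x ∈ A.toFinset, ℓ x := by
  rw [wt, ← finsum_mem_coe_finset, Set.coe_toFinset]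

open Classical in
lemma wt_exchange {α : Type*} [Fintype α] (ℓ : α → ℝ) {A : Set α} {b e : α}
    (hb : b ∈ A) (he : e ∉ A) :
    wt ℓ (insert e (A \ {b})) = wt ℓ A - ℓ b + ℓ e := by
  rw [wt_eq, wt_eq]
  simp only [Set.toFinset_insert, Set.toFinset_diff, Set.toFinset_singleton]
  rw [Finset.sum_insert (by simp [he])]
  rw [← Finset.erase_eq, Finset.sum_erase_eq_sub (by simpa using hb)]
  ring

lemma key_local_global {α : Type*} [Fintype α] (M : Matroid α) (ℓ : α → ℝ)
    {C S : Set α} (hC : M.IsBase C) (hS : S ⊆ C)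
    (hloc : ∀ b ∈ C, b ∉ S → ∀ e, e ∉ C → M.IsBase (insert e (C \ {b})) → ℓ b < ℓ e) :
    ∀ B', M.IsBase B' → S ⊆ B' → wt ℓ C ≤ wt ℓ B' := by
  suffices h : ∀ n : ℕ, ∀ B', M.IsBase B' → S ⊆ B' → (B' \ C).ncard = n →
      wt ℓ C ≤ wt ℓ B' by
    intro B' hB' hSB'
    exact h _ B' hB' hSB' rfl
  intro n
  induction n using Nat.strong_induction_on with
  | _ n IH =>
    intro B' hB' hSB' hcard
    by_cases hCB : C \ B' = ∅
    · have hsub : C ⊆ B' := by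
        intro x hx
        by_contra hxB
        exact (Set.eq_empty_iff_forall_notMem.mp hCB x) ⟨hx, hxB⟩
      rw [hC.eq_of_subset_isBase hB' hsub]
    · -- pick b ∈ C \ B' with maximal ℓ
      obtain ⟨b, hbmem, hbmax⟩ := Set.exists_max_image (C \ B') ℓ (Set.toFinite _)
        (Set.nonempty_iff_ne_empty.mpr hCB)
      -- exchange b out of C
      obtain ⟨b', hb'mem, hb'base⟩ := hC.exchange hB' hbmem
      have hbS : b ∉ S := fun h => hbmem.2 (hSB' h)
      have hbb' : ℓ b < ℓ b' := hloc b hbmem.1 hbS b' hb'mem.2 hb'base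
      -- exchange b' out of B'
      obtain ⟨c, hcmem, hcbase⟩ := hB'.exchange hC hb'mem
      have hcb' : ℓ c < ℓ b' := lt_of_le_of_lt (hbmax c hcmem) hbb'
      set B'' := insert c (B' \ {b'}) with hB''def
      have hSB'' : S ⊆ B'' := by
        intro x hx
        have hxB' : x ∈ B' := hSB' hx
        have hxb' : x ≠ b' := fun h => hb'mem.2 (h ▸ hS hx)
        exact Set.mem_insert_of_mem _ ⟨hxB', hxb'⟩
      have hdiff : B'' \ C = (B' \ C) \ {b'} := by
        ext x
        simp only [hB''def, Set.mem_diff, Set.mem_insert_iff, Set.mem_singleton_iff]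
        constructor
        · rintro ⟨h1 | ⟨h2, h3⟩, h4⟩
          · exact absurd (h1 ▸ hcmem.1) h4
          · exact ⟨⟨h2, h4⟩, h3⟩
        · rintro ⟨⟨h1, h2⟩, h3⟩
          exact ⟨Or.inr ⟨h1, h3⟩, h2⟩
      have hssub : B'' \ C ⊂ B' \ C := by
        rw [hdiff]
        exact Set.ssubset_iff_of_subset Set.diff_subset |>.mpr
          ⟨b', hb'mem, fun h => h.2 rfl⟩
      have hcardlt : (B'' \ C).ncard < n := by
        rw [← hcard]
        exact Set.ncard_lt_ncard hssub (Set.toFinite _)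
      have hIH := IH _ hcardlt B'' hcbase hSB'' rfl
      have hwt : wt ℓ B'' = wt ℓ B' - ℓ b' + ℓ c :=
        wt_exchange ℓ hb'mem.1 hcmem.2
      linarith


theorem restriction_sets_of_weight_shelling_are_IP {α : Type*} [Fintype α]
    (M : Matroid α) (hE : M.E = Set.univ)
    (ℓ : α → ℝ) (hgen : Generic M ℓ)
    {n : ℕ} (B : Fin n → Set α) (hB : EnumeratesBases M B)
    (hsort : ∀ i j : Fin n, i < j → wt ℓ (B i) < wt ℓ (B j)) :
    (∀ C : Set α, M.IsBase C → ∀ S : Set α, S ⊆ C →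
      ((∃ B' : Set α, M.IsBase B' ∧ wt ℓ B' < wt ℓ C ∧ S ⊆ B') ↔
        ¬ IP M (fun x y => ℓ x < ℓ y) C ⊆ S)) ∧
    (∀ j : Fin n, restrictionSet B j = IP M (fun x y => ℓ x < ℓ y) (B j)) := by
  obtain ⟨hinj, -⟩ := hgen
  have part1 : ∀ C : Set α, M.IsBase C → ∀ S : Set α, S ⊆ C →
      ((∃ B' : Set α, M.IsBase B' ∧ wt ℓ B' < wt ℓ C ∧ S ⊆ B') ↔
        ¬ IP M (fun x y => ℓ x < ℓ y) C ⊆ S) := by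
    intro C hC S hS
    constructor
    · rintro ⟨B', hB', hlt, hSB'⟩ hIP
      have hloc : ∀ b ∈ C, b ∉ S → ∀ e, e ∉ C → M.IsBase (insert e (C \ {b})) → ℓ b < ℓ e := by
        intro b hb hbS e heC hbase
        rcases lt_trichotomy (ℓ e) (ℓ b) with h | h | h
        · exact absurd (hIP ⟨hb, e, heC, h, hbase⟩) hbS
        · exact absurd (hinj h) (fun heq => heC (heq ▸ hb))
        · exact h
      exact absurd hlt (not_lt.mpr (key_local_global M ℓ hC hS hloc B' hB' hSB'))
    · intro hIP
      obtain ⟨b, hbIP, hbS⟩ := Set.not_subset.mp hIP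
      obtain ⟨hbC, b', hb'C, hlt, hbase⟩ := hbIP
      refine ⟨insert b' (C \ {b}), hbase, ?_, ?_⟩
      · rw [wt_exchange ℓ hbC hb'C]; linarith
      · intro x hx
        exact Set.mem_insert_of_mem _ ⟨hS hx, fun h => hbS (h ▸ hx)⟩
  refine ⟨part1, ?_⟩
  intro j
  have hjbase := hB.2.1 j
  ext x
  constructor
  · rintro ⟨hxj, i, hij, hsub⟩
    have := (part1 (B j) hjbase (B j \ {x}) Set.diff_subset).mp
      ⟨B i, hB.2.1 i, hsort i j hij, hsub⟩
    obtain ⟨b, hbIP, hbS⟩ := Set.not_subset.mp this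
    have hbj : b ∈ B j := hbIP.1
    have : b = x := by
      by_contra h
      exact hbS ⟨hbj, h⟩
    exact this ▸ hbIP
  · intro hxIP
    have hxj : x ∈ B j := hxIP.1
    have hnot : ¬ IP M (fun x y => ℓ x < ℓ y) (B j) ⊆ (B j \ {x}) := by
      intro h
      exact (h hxIP).2 rfl
    obtain ⟨B', hB', hlt, hSB'⟩ :=
      (part1 (B j) hjbase (B j \ {x}) Set.diff_subset).mpr hnot
    obtain ⟨i, hi⟩ := hB.2.2 B' hB'
    have hij : i < j := by
      rcases lt_trichotomy i j with h | h | h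
      · exact h
      · exfalso; rw [h] at hi; rw [← hi] at hlt; exact lt_irrefl _ hlt
      · have := hsort j i h
        rw [hi] at this
        linarith
    exact ⟨hxj, i, hij, hi ▸ hSB'⟩
end

section
/- Let M be a matroid on a finite ground set E equipped with a linear order <, and enumerate the bases of M in lexicographic order: B precedes B' iff B ≠ B' and the <-smallest element of the symmetric difference B △ B' belongs to B. Then this enumeration is a shelling order of the independence complex I(M), and for every basis B the restriction set R(B) of this shelling equals the internally passive set IP_<(B). (Björner's theorem, recovered in Section 4.) -/
/-- `B` lexicographically precedes `B'`: they are distinct and the smallest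
element of the symmetric difference `B △ B'` belongs to `B`. -/
def LexLt {α : Type*} [LinearOrder α] (B B' : Set α) : Prop :=
  B ≠ B' ∧ ∃ x ∈ (B \ B') ∪ (B' \ B), x ∈ B ∧ ∀ y ∈ (B \ B') ∪ (B' \ B), x ≤ y


open Set

section Aux
variable {α : Type*}

/-- Differences for a single-element exchange. -/
lemma exch_diffs {D : Set α} {x x' : α} (hx : x ∈ D) (hx' : x' ∉ D) :
    (insert x' (D \ {x})) \ D = {x'} ∧ D \ (insert x' (D \ {x})) = {x} := by
  have hxx' : x' ≠ x := fun h => hx' (h ▸ hx)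
  refine ⟨?_, ?_⟩
  · ext a
    simp only [mem_diff, mem_insert_iff, mem_singleton_iff]
    constructor
    · rintro ⟨rfl | ⟨h1, _⟩, h3⟩
      · rfl
      · exact absurd h1 h3
    · rintro rfl
      exact ⟨Or.inl rfl, hx'⟩
  · ext a
    simp only [mem_diff, mem_insert_iff, mem_singleton_iff, not_or, not_and, not_not]
    constructor
    · rintro ⟨h1, _, h3⟩
      exact h3 h1
    · rintro rfl
      exact ⟨hx, hxx'.symm, fun _ => rfl⟩

/-- A single-element exchange with a smaller incoming element is lex-smaller. -/
lemma lexLt_exchange [LinearOrder α] {D : Set α} {x x' : α}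
    (hx : x ∈ D) (hx' : x' ∉ D) (hlt : x' < x) :
    LexLt (insert x' (D \ {x})) D := by
  obtain ⟨h1, h2⟩ := exch_diffs hx hx'
  refine ⟨fun h => hx' (h ▸ mem_insert x' _), x', ?_, mem_insert _ _, ?_⟩
  · rw [h1, h2]; exact Or.inl rfl
  · rw [h1, h2]
    rintro y (rfl | rfl)
    · exact le_rfl
    · exact hlt.le

lemma lexLt_asymm [LinearOrder α] {A D : Set α} (h1 : LexLt A D) (h2 : LexLt D A) : False := by
  obtain ⟨_, x, hxmem, hxA, hxmin⟩ := h1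
  obtain ⟨_, y, hymem, hyD, hymin⟩ := h2
  have hxy : x = y := le_antisymm (hxmin y (by rcases hymem with h | h; exacts [Or.inr h, Or.inl h]))
    (hymin x (by rcases hxmem with h | h; exacts [Or.inr h, Or.inl h]))
  subst hxy
  rcases hxmem with h | h
  · exact h.2 hyD
  · exact h.2 hxA

/-- Co-exchange: for bases `A`, `D` and `x ∈ A \ D` there is `y ∈ D \ A` such that
`insert x (D \ {y})` is a base. -/
lemma co_exchange {M : Matroid α} {A D : Set α} (hA : M.IsBase A) (hD : M.IsBase D)
    {x : α} (hx : x ∈ A \ D) : ∃ y ∈ D \ A, M.IsBase (insert x (D \ {y})) := by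
  have hI : M.Indep (insert x (A ∩ D)) :=
    hA.indep.subset (insert_subset hx.1 inter_subset_left)
  obtain ⟨B', hB', hIB', hB'sub⟩ := hI.exists_isBase_subset_union_isBase hD
  have hsub : B' ⊆ insert x D := by
    refine hB'sub.trans ?_
    rintro a (h | h)
    · rcases h with rfl | h
      · exact mem_insert _ _
      · exact Or.inr h.2
    · exact Or.inr h
  have hxB' : x ∈ B' := hIB' (mem_insert _ _)
  have h1 : B' \ D = {x} := by
    apply subset_antisymm
    · rintro a ⟨ha, haD⟩
      rcases hsub ha with rfl | h
      · rfl
      · exact absurd h haD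
    · rintro a rfl; exact ⟨hxB', hx.2⟩
  have h2 : (D \ B').encard = 1 := by
    rw [hD.encard_diff_comm hB', h1, encard_singleton]
  obtain ⟨y, hy⟩ := encard_eq_one.mp h2
  have hymem : y ∈ D \ B' := hy ▸ rfl
  have hyA : y ∉ A := fun hyA => hymem.2 (hIB' (Or.inr ⟨hyA, hymem.1⟩))
  have hB'eq : B' = insert x (D \ {y}) := by
    ext a
    constructor
    · intro ha
      rcases hsub ha with rfl | h
      · exact mem_insert _ _
      · refine Or.inr ⟨h, ?_⟩
        rintro rfl; exact hymem.2 ha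
    · rintro (rfl | ⟨haD, hay⟩)
      · exact hxB'
      · by_contra haB'
        exact hay (hy ▸ (⟨haD, haB'⟩ : a ∈ D \ B') : a ∈ ({y} : Set α))
  exact ⟨y, ⟨hymem.1, hyA⟩, hB'eq ▸ hB'⟩

end Aux


theorem lex_order_is_shelling_with_IP_restriction_sets
    {α : Type*} [Fintype α] [LinearOrder α]
    (M : Matroid α) (hE : M.E = Set.univ)
    {n : ℕ} (B : Fin n → Set α) (hB : EnumeratesBases M B)
    (hlex : ∀ i j : Fin n, i < j → LexLt (B i) (B j)) :
    IsShelling B ∧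
      ∀ j : Fin n, restrictionSet B j = IP M (· < ·) (B j) := by
  classical
  obtain ⟨hinj, hbase, hsurj⟩ := hB
  have index_lt : ∀ i j : Fin n, LexLt (B i) (B j) → i < j := by
    intro i j h
    rcases lt_trichotomy i j with h' | h' | h'
    · exact h'
    · exact absurd (congrArg B h') h.1
    · exact absurd (hlex j i h') fun h2 => lexLt_asymm h2 h
  constructor
  · -- shelling
    intro i j hij
    obtain ⟨hne, x, hxmem, hxBi, hxmin⟩ := hlex i j hij
    have hxj : x ∉ B j := by
      rcases hxmem with h | h
      · exact h.2
      · exact absurd hxBi h.2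
    obtain ⟨y, hy, hbase'⟩ := co_exchange (hbase i) (hbase j) ⟨hxBi, hxj⟩
    have hxy : x < y :=
      lt_of_le_of_ne (hxmin y (Or.inr hy)) (by rintro rfl; exact hy.2 hxBi)
    obtain ⟨k, hk⟩ := hsurj _ hbase'
    have hklt : k < j := index_lt k j (by rw [hk]; exact lexLt_exchange hy.1 hxj hxy)
    have hkj : B k ∩ B j = B j \ {y} := by
      rw [hk]
      ext a
      simp only [Set.mem_inter_iff, Set.mem_insert_iff, Set.mem_diff,
        Set.mem_singleton_iff]
      constructor
      · rintro ⟨rfl | ⟨h1, h2⟩, h3⟩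
        · exact absurd h3 hxj
        · exact ⟨h3, h2⟩
      · rintro ⟨h1, h2⟩; exact ⟨Or.inr ⟨h1, h2⟩, h1⟩
    refine ⟨k, hklt, ?_, ?_⟩
    · rw [hkj]
      rintro a ⟨ha1, ha2⟩
      exact ⟨ha2, by rintro rfl; exact hy.2 ha1⟩
    · rw [hkj]
      exact Set.ncard_diff_singleton_of_mem hy.1
  · -- restriction sets
    intro j
    ext x
    simp only [restrictionSet, IP, Set.mem_setOf_eq]
    constructor
    · rintro ⟨hxj, i, hij, hsub⟩
      have hne : B i ≠ B j := fun h => absurd (hinj h) (ne_of_lt hij)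
      have hxi : x ∉ B i := by
        intro hxi
        refine hne ?_
        refine ((hbase j).eq_of_subset_isBase (hbase i) ?_).symm
        intro a ha
        by_cases h : a = x
        · exact h ▸ hxi
        · exact hsub ⟨ha, h⟩
      have hdiff : B j \ B i = {x} := by
        apply subset_antisymm
        · rintro a ⟨ha1, ha2⟩
          by_contra h
          exact ha2 (hsub ⟨ha1, h⟩)
        · rintro a rfl; exact ⟨hxj, hxi⟩
      obtain ⟨x', hx', heq⟩ := (hbase j).eq_exchange_of_diff_eq_singleton (hbase i) hdiff
      have hx'x : x' ≠ x := by rintro rfl; exact hx'.2 hxj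
      obtain ⟨_, m, hmmem, hmBi, hmmin⟩ := hlex i j hij
      have hmx' : m = x' := by
        rcases hmmem with h | h
        · have : m ∈ insert x' (B j) \ {x} := heq ▸ h.1
          rcases this.1 with h' | h'
          · exact h'
          · exact absurd h' h.2
        · exact absurd hmBi h.2
      have hlt : x' < x :=
        lt_of_le_of_ne (hmx' ▸ hmmin x (Or.inr ⟨hxj, hxi⟩)) hx'x
      refine ⟨hxj, x', hx'.2, hlt, ?_⟩
      have : B i = insert x' (B j \ {x}) := by
        rw [heq, Set.insert_diff_singleton_comm hx'x]
      exact this ▸ hbase i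
    · rintro ⟨hxj, x', hx'nj, hlt, hbaseC⟩
      obtain ⟨i, hi⟩ := hsurj _ hbaseC
      have hilt : i < j := index_lt i j (by rw [hi]; exact lexLt_exchange hxj hx'nj hlt)
      exact ⟨hxj, i, hilt, by rw [hi]; exact Set.subset_insert _ _⟩
end

section
/- Let M be a matroid on a finite ground set E and let ℓ : E → ℝ be generic. Enumerate the bases of M as B₁, …, Bₙ so that ℓ(B₁) > ℓ(B₂) > … > ℓ(Bₙ) (strictly decreasing ℓ-weight). Then this enumeration is a shelling order of the independence complex I(M). In particular, every ℓ-weight shelling order of I(M) is reversible. (Chari's reversibility result, recovered in Section 4.) -/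
/-!
STATEMENT 3 (Chari's reversibility): ordering the bases by strictly decreasing
`ℓ`-weight of a generic `ℓ` is also a shelling order of the independence
complex; in particular every `ℓ`-weight shelling order is reversible.
-/

open scoped BigOperators

lemma wt_insert_s3 {α : Type*} (ℓ : α → ℝ) {A : Set α} (hA : A.Finite) {f : α} (hf : f ∉ A) :
    wt ℓ (insert f A) = ℓ f + wt ℓ A :=
  finsum_mem_insert ℓ hf hA

lemma wt_diff_singleton {α : Type*} (ℓ : α → ℝ) {A : Set α} (hA : A.Finite) {e : α}
    (he : e ∈ A) : wt ℓ (A \ {e}) = wt ℓ A - ℓ e := by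
  have h : A = insert e (A \ {e}) := by
    ext x; by_cases hx : x = e <;> simp [hx, he]
  have := wt_insert_s3 ℓ (hA.diff) (show e ∉ A \ {e} by simp)
  rw [← h] at this
  linarith

/-- Key exchange lemma: if `B'` has strictly larger weight than the base `B`, then there is
an improving single exchange for `B`, swapping out an element of `B \ B'`. -/
lemma improving_exchange {α : Type*} [Fintype α] (M : Matroid α) (ℓ : α → ℝ)
    (hinj : Function.Injective ℓ) :
    ∀ m : ℕ, ∀ B B' : Set α, (B' \ B).ncard = m → M.IsBase B → M.IsBase B' →
      wt ℓ B < wt ℓ B' →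
      ∃ e ∈ B \ B', ∃ f ∉ B, ℓ e < ℓ f ∧ M.IsBase (insert f (B \ {e})) := by
  intro m
  induction m using Nat.strong_induction_on with
  | _ m ih =>
    intro B B' hm hB hB' hlt
    have hBfin : B.Finite := Set.toFinite B
    have hB'fin : B'.Finite := Set.toFinite B'
    rcases Set.eq_empty_or_nonempty (B' \ B) with hemp | hne
    · have hsub : B' ⊆ B := Set.diff_eq_empty.mp hemp
      rw [hB'.eq_of_subset_isBase hB hsub] at hlt
      exact absurd hlt (lt_irrefl _)
    · -- pick f₀ ∈ B' \ B with minimal weight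
      classical
      obtain ⟨f₀, hf₀mem, hf₀min⟩ :=
        ((hB'fin.diff (t := B)).toFinset.exists_min_image ℓ
          (by rwa [Set.Finite.toFinset_nonempty]))
      rw [Set.Finite.mem_toFinset] at hf₀mem
      obtain ⟨g, hg, hBase''⟩ := hB'.exchange hB hf₀mem
      have hgne : ℓ g ≠ ℓ f₀ := fun h => hf₀mem.2 (hinj h ▸ hg.1)
      rcases lt_or_gt_of_ne hgne with hlt' | hgt
      · -- ℓ g < ℓ f₀ : exchange directly from B at g
        obtain ⟨f, hf, hBf⟩ := hB.exchange hB' hg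
        refine ⟨g, hg, f, hf.2, ?_, hBf⟩
        have := hf₀min f (by rwa [Set.Finite.mem_toFinset])
        linarith
      · -- ℓ f₀ < ℓ g : replace B' by the heavier base B'' and recurse
        set B'' := insert g (B' \ {f₀}) with hB''def
        have hgnot : g ∉ B' \ {f₀} := fun h => hg.2 h.1
        have hwt'' : wt ℓ B'' = wt ℓ B' - ℓ f₀ + ℓ g := by
          rw [hB''def, wt_insert_s3 ℓ (hB'fin.diff) hgnot,
            wt_diff_singleton ℓ hB'fin hf₀mem.1]
          ring
        have hlt'' : wt ℓ B < wt ℓ B'' := by rw [hwt'']; linarith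
        have hdiff : B'' \ B = (B' \ B) \ {f₀} := by
          ext x
          simp only [hB''def, Set.mem_diff, Set.mem_insert_iff, Set.mem_singleton_iff]
          constructor
          · rintro ⟨rfl | ⟨hx1, hx2⟩, hxB⟩
            · exact absurd hg.1 hxB
            · exact ⟨⟨hx1, hxB⟩, hx2⟩
          · rintro ⟨⟨hx1, hx2⟩, hx3⟩
            exact ⟨Or.inr ⟨hx1, hx3⟩, hx2⟩
        have hcard : ((B'' \ B)).ncard < m := by
          rw [hdiff, ← hm]
          have hss : (B' \ B) \ {f₀} ⊂ B' \ B :=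
            (Set.ssubset_iff_of_subset Set.diff_subset).mpr ⟨f₀, hf₀mem, by simp⟩
          exact Set.ncard_lt_ncard hss (hB'fin.diff (t := B))
        obtain ⟨e, he, f, hfB, hef, hbase⟩ :=
          ih _ hcard B B'' rfl hB hBase'' hlt''
        refine ⟨e, ⟨he.1, ?_⟩, f, hfB, hef, hbase⟩
        -- e ∈ B \ B'' implies e ∉ B'
        intro heB'
        apply he.2
        rw [hB''def]
        rcases eq_or_ne e f₀ with rfl | hne
        · exact absurd he.1 hf₀mem.2
        · exact Or.inr ⟨heB', hne⟩

theorem decreasing_weight_order_is_shelling {α : Type*} [Fintype α]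
    (M : Matroid α) (hE : M.E = Set.univ)
    (ℓ : α → ℝ) (hgen : Generic M ℓ)
    {n : ℕ} (B : Fin n → Set α) (hB : EnumeratesBases M B)
    (hsort : ∀ i j : Fin n, i < j → wt ℓ (B j) < wt ℓ (B i)) :
    IsShelling B := by
  obtain ⟨hBinj, hBbase, hBsurj⟩ := hB
  intro i j hij
  have hlt : wt ℓ (B j) < wt ℓ (B i) := hsort i j hij
  obtain ⟨e, he, f, hf, hef, hbase⟩ :=
    improving_exchange M ℓ hgen.1 _ (B j) (B i) rfl (hBbase j) (hBbase i) hlt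
  obtain ⟨k, hk⟩ := hBsurj _ hbase
  have hBjfin : (B j).Finite := Set.toFinite _
  have hwtk : wt ℓ (B j) < wt ℓ (B k) := by
    rw [hk, wt_insert_s3 ℓ (hBjfin.diff) (fun h => hf h.1),
      wt_diff_singleton ℓ hBjfin he.1]
    linarith
  have hkj : k < j := by
    rcases lt_trichotomy k j with h | h | h
    · exact h
    · exact absurd (h ▸ hwtk) (lt_irrefl _)
    · exact absurd (hsort j k h) (by linarith)
  have hinter : B k ∩ B j = B j \ {e} := by
    rw [hk]
    ext x
    simp only [Set.mem_inter_iff, Set.mem_insert_iff, Set.mem_diff, Set.mem_singleton_iff]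
    constructor
    · rintro ⟨rfl | ⟨hx1, hx2⟩, hxj⟩
      · exact absurd hxj hf
      · exact ⟨hxj, hx2⟩
    · rintro ⟨hx1, hx2⟩
      exact ⟨Or.inr ⟨hx1, hx2⟩, hx1⟩
  refine ⟨k, hkj, ?_, ?_⟩
  · rw [hinter]
    rintro x ⟨hxi, hxj⟩
    exact ⟨hxj, fun h => he.2 (h ▸ hxi)⟩
  · rw [hinter, Set.ncard_diff_singleton_of_mem he.1]
end

section
/- Let M be a matroid on a finite ground set E with a linear order < on E, and let ≺ be a linear order on the set of bases of M such that whenever IP_<(B) is a proper subset of IP_<(B'), one has B ≺ B'. Then the enumeration of the bases in increasing ≺-order is a shelling order of the independence complex I(M). (Any linear extension of the internal order Int_<(M) is a shelling order; Theorem of Ardila–Castillo–Samper restated in Section 5.) -/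
open Set

section ACS

variable {α : Type*} [Fintype α] [LinearOrder α] {M : Matroid α}

private lemma acs_mem_univ (hE : M.E = Set.univ) (X : Set α) : X ⊆ M.E := by
  rw [hE]; exact subset_univ _

/-- For a base `B`, `c ∈ B` and `d ∉ B`, either the exchange gives a base or
`d` is in the closure of `B \ {c}`. -/
private lemma acs_base_or_closure (hE : M.E = Set.univ) {B : Set α} {c d : α}
    (hB : M.IsBase B) (hc : c ∈ B) (hd : d ∉ B) :
    M.IsBase (insert d (B \ {c})) ∨ d ∈ M.closure (B \ {c}) := by
  by_cases hcl : d ∈ M.closure (B \ {c})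
  · exact Or.inr hcl
  · left
    have hdnc : d ∉ B \ {c} := fun h => hd h.1
    have hind : M.Indep (insert d (B \ {c})) := by
      rw [(hB.indep.subset diff_subset).insert_indep_iff_of_notMem hdnc, hE]
      exact ⟨mem_univ d, hcl⟩
    refine hind.isBase_of_ground_subset_closure ?_
    have hcm : c ∈ M.closure (insert d (B \ {c})) := by
      refine Matroid.mem_closure_insert hcl ?_
      have h : insert c (B \ {c}) = B := insert_diff_singleton.trans (insert_eq_self.2 hc)
      rw [h, hB.closure_eq, hE]; exact mem_univ d
    have hBsub : B ⊆ M.closure (insert d (B \ {c})) := by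
      intro x hx
      by_cases hxc : x = c
      · exact hxc ▸ hcm
      · exact (M.subset_closure (insert d (B \ {c})) (acs_mem_univ hE _))
          (mem_insert_of_mem _ ⟨hx, hxc⟩)
    calc M.E = M.closure B := hB.closure_eq.symm
      _ ⊆ M.closure (M.closure (insert d (B \ {c}))) := M.closure_subset_closure hBsub
      _ = M.closure (insert d (B \ {c})) := M.closure_closure _

/-- Key closure lemma: membership in the closures of two punctured bases gives
membership in the closure of the doubly punctured base. -/
private lemma acs_closure_diff_pair (hE : M.E = Set.univ) {B : Set α} {b c d : α}
    (hB : M.IsBase B) (hc : c ∈ B) (hbc : b ≠ c)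
    (h1 : d ∈ M.closure (B \ {b})) (h2 : d ∈ M.closure (B \ {c})) :
    d ∈ M.closure ((B \ {b}) \ {c}) := by
  by_contra hJ
  set J : Set α := (B \ {b}) \ {c} with hJdef
  have hBb : B \ {b} = insert c J := by
    ext x; simp only [hJdef, mem_insert_iff, mem_diff, mem_singleton_iff]
    constructor
    · rintro ⟨hxB, hxb⟩
      by_cases hxc : x = c
      · exact Or.inl hxc
      · exact Or.inr ⟨⟨hxB, hxb⟩, hxc⟩
    · rintro (rfl | ⟨⟨hxB, hxb⟩, _⟩)
      · exact ⟨hc, Ne.symm hbc⟩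
      · exact ⟨hxB, hxb⟩
  have hBc : B \ {c} ⊆ insert b J := by
    rintro x ⟨hxB, hxc⟩
    by_cases hxb : x = b
    · exact Or.inl hxb
    · exact Or.inr ⟨⟨hxB, hxb⟩, hxc⟩
  have hcm : c ∈ M.closure (insert d J) :=
    Matroid.mem_closure_insert hJ (hBb ▸ h1)
  have hbm : b ∈ M.closure (insert d J) :=
    Matroid.mem_closure_insert hJ (M.closure_subset_closure hBc h2)
  have hBsub : B ⊆ M.closure (insert d J) := by
    intro x hx
    by_cases hxb : x = b
    · exact hxb ▸ hbm
    by_cases hxc : x = c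
    · exact hxc ▸ hcm
    exact (M.subset_closure (insert d J) (acs_mem_univ hE _))
      (mem_insert_of_mem _ ⟨⟨hx, hxb⟩, hxc⟩)
  have hsub2 : insert d J ⊆ M.closure (B \ {c}) := by
    refine insert_subset h2 ?_
    intro x hx
    exact (M.subset_closure (B \ {c}) (acs_mem_univ hE _)) ⟨hx.1.1, hx.2⟩
  have hccl : c ∈ M.closure (B \ {c}) := by
    have h3 : M.closure (insert d J) ⊆ M.closure (B \ {c}) := by
      have h4 := M.closure_subset_closure hsub2
      rwa [M.closure_closure] at h4
    exact h3 (hBsub hc)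
  exact hB.indep.notMem_closure_diff_of_mem hc hccl

/-- The down move: replacing an internally passive element `b` of a base by the minimum
element that can replace it yields a base whose internally passive set is contained
in `IP(B) \ {b}`. -/
private lemma acs_ip_down (hE : M.E = Set.univ) {Bs : Set α} (hBs : M.IsBase Bs) {b : α}
    (hb : b ∈ IP M (· < ·) Bs) :
    ∃ b₀, b₀ ∉ Bs ∧ b₀ < b ∧ M.IsBase (insert b₀ (Bs \ {b})) ∧
      IP M (· < ·) (insert b₀ (Bs \ {b})) ⊆ IP M (· < ·) Bs \ {b} := by
  obtain ⟨hbBs, b', hb'n, hb'lt, hb'base⟩ := hb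
  set S : Set α := {x | x < b ∧ M.IsBase (insert x (Bs \ {b}))} with hSdef
  obtain ⟨b₀, hb₀S, hmin⟩ := Set.exists_min_image S id (Set.toFinite S) ⟨b', hb'lt, hb'base⟩
  obtain ⟨hb₀lt, hb₀base⟩ := hb₀S
  have hb₀n : b₀ ∉ Bs := by
    intro hin
    have h : insert b₀ (Bs \ {b}) = Bs \ {b} :=
      insert_eq_self.2 ⟨hin, ne_of_lt hb₀lt⟩
    rw [h] at hb₀base
    have h2 := hb₀base.eq_of_subset_isBase hBs diff_subset
    have h3 : b ∈ Bs \ {b} := h2.symm ▸ hbBs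
    exact h3.2 rfl
  refine ⟨b₀, hb₀n, hb₀lt, hb₀base, ?_⟩
  set C : Set α := insert b₀ (Bs \ {b}) with hCdef
  rintro c ⟨hcC, d, hdC, hdc, hD⟩
  have hbC : b ∉ C := by
    rintro (h | h)
    · exact absurd h.symm (ne_of_lt hb₀lt)
    · exact h.2 rfl
  have hcb : c ≠ b := fun h => hbC (h ▸ hcC)
  by_cases hc0 : c = b₀
  · exfalso
    subst hc0
    have hCc : C \ {c} = Bs \ {b} := by
      rw [hCdef, insert_diff_self_of_notMem (fun h => hb₀n h.1)]
    rw [hCc] at hD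
    have : c ≤ d := hmin d ⟨lt_trans hdc hb₀lt, hD⟩
    exact absurd hdc (not_lt.2 this)
  · have hcBs' : c ∈ Bs \ {b} := hcC.resolve_left hc0
    have hcBs : c ∈ Bs := hcBs'.1
    have hdb₀ : d ≠ b₀ := fun h => hdC (h ▸ mem_insert _ _)
    have hCc : C \ {c} = insert b₀ ((Bs \ {b}) \ {c}) := by
      rw [hCdef, insert_diff_of_notMem _ (by simpa using Ne.symm hc0)]
    refine ⟨⟨hcBs, ?_⟩, hcb⟩
    by_cases hdb : d = b
    · subst hdb
      have hDeq : insert d (C \ {c}) = insert b₀ (Bs \ {c}) := by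
        rw [hCc]
        ext x
        simp only [mem_insert_iff, mem_diff, mem_singleton_iff]
        constructor
        · rintro (rfl | rfl | ⟨⟨hx1, hx2⟩, hx3⟩)
          · exact Or.inr ⟨hbBs, Ne.symm hcb⟩
          · exact Or.inl rfl
          · exact Or.inr ⟨hx1, hx3⟩
        · rintro (rfl | ⟨hx1, hx2⟩)
          · exact Or.inr (Or.inl rfl)
          · by_cases hxb : x = d
            · exact Or.inl hxb
            · exact Or.inr (Or.inr ⟨⟨hx1, hxb⟩, hx2⟩)
      rw [hDeq] at hD
      exact ⟨b₀, hb₀n, lt_trans hb₀lt hdc, hD⟩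
    · have hdBs : d ∉ Bs := fun h => hdC (mem_insert_of_mem _ ⟨h, hdb⟩)
      rcases acs_base_or_closure hE hBs hcBs hdBs with h1 | h1
      · exact ⟨d, hdBs, hdc, h1⟩
      rcases acs_base_or_closure hE hBs hbBs hdBs with h2 | h2
      · -- `insert d (Bs \ {b})` is a base, so `b₀ ≤ d` or `b ≤ d`; hence `b₀ < c`.
        have hb₀c : b₀ < c := by
          rcases lt_or_ge d b with h | h
          · exact lt_of_le_of_lt (hmin d ⟨h, h2⟩) hdc
          · exact lt_trans hb₀lt (lt_of_lt_of_le' hdc h)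
        rcases acs_base_or_closure hE hBs hcBs hb₀n with h3 | h3
        · exact ⟨b₀, hb₀n, hb₀c, h3⟩
        · exfalso
          have hDsub : insert d (C \ {c}) ⊆ M.closure (Bs \ {c}) := by
            rw [hCc]
            refine insert_subset h1 (insert_subset h3 ?_)
            intro x hx
            exact (M.subset_closure (Bs \ {c}) (acs_mem_univ hE _)) ⟨hx.1.1, hx.2⟩
          have h4 := M.closure_subset_closure hDsub
          rw [M.closure_closure, hD.closure_eq, hE] at h4
          exact hBs.indep.notMem_closure_diff_of_mem hcBs (h4 (mem_univ c))
      · exfalso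
        have hK : d ∈ M.closure ((Bs \ {b}) \ {c}) :=
          acs_closure_diff_pair hE hBs hcBs (Ne.symm hcb) h2 h1
        have hDsub : insert d (C \ {c}) ⊆ M.closure (C \ {c}) := by
          refine insert_subset ?_ (M.subset_closure _ (acs_mem_univ hE _))
          refine M.closure_subset_closure ?_ hK
          rw [hCc]; exact subset_insert _ _
        have h4 := M.closure_subset_closure hDsub
        rw [M.closure_closure, hD.closure_eq, hE] at h4
        exact hb₀base.indep.notMem_closure_diff_of_mem hcC (h4 (mem_univ c))

/-- Exchange at the maximum of the symmetric difference produces an internally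
passive element. -/
private lemma acs_exch_max {A Bs : Set α} (hA : M.IsBase A) (hBs : M.IsBase Bs) {e : α}
    (he : e ∈ Bs \ A) (hmax : ∀ x ∈ A \ Bs, x < e) : e ∈ IP M (· < ·) Bs := by
  obtain ⟨f, hf, hbase⟩ := hBs.exchange hA he
  exact ⟨he.1, f, hf.2, hmax f hf, hbase⟩

/-- If each of two bases contains the internally passive set of the other,
they are equal. -/
private lemma acs_ip_antisymm {A Bs : Set α} (hA : M.IsBase A) (hBs : M.IsBase Bs)
    (h1 : IP M (· < ·) Bs ⊆ A) (h2 : IP M (· < ·) A ⊆ Bs) : A = Bs := by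
  by_contra hne
  have hsd : ((A \ Bs) ∪ (Bs \ A)).Nonempty := by
    rw [nonempty_iff_ne_empty]
    intro h
    rw [union_empty_iff, diff_eq_empty, diff_eq_empty] at h
    exact hne (subset_antisymm h.1 h.2)
  obtain ⟨e, he, hmax⟩ := Set.exists_max_image _ id (Set.toFinite _) hsd
  rcases he with he | he
  · have hlt : ∀ x ∈ Bs \ A, x < e := by
      intro x hx
      refine lt_of_le_of_ne (hmax x (Or.inr hx)) (fun h => he.2 (h ▸ hx.1))
    exact he.2 (h2 (acs_exch_max hBs hA he hlt))
  · have hlt : ∀ x ∈ A \ Bs, x < e := by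
      intro x hx
      refine lt_of_le_of_ne (hmax x (Or.inl hx)) (fun h => he.2 (h ▸ hx.1))
    exact he.2 (h1 (acs_exch_max hA hBs he hlt))

/-- Monotonicity (ACS): if `IP(Bs) ⊆ A` for bases `A, Bs`, then `IP(Bs) ⊆ IP(A)`. -/
private lemma acs_ip_mono (hE : M.E = Set.univ) :
    ∀ N : ℕ, ∀ A Bs : Set α, M.IsBase A → M.IsBase Bs →
      (IP M (· < ·) A).ncard ≤ N → IP M (· < ·) Bs ⊆ A →
      IP M (· < ·) Bs ⊆ IP M (· < ·) A := by
  intro N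
  induction N with
  | zero =>
    intro A Bs hA hBs hcard hsub
    have hemp : IP M (· < ·) A = ∅ :=
      (ncard_eq_zero (Set.toFinite _)).1 (Nat.le_zero.1 hcard)
    have hAB : A = Bs := acs_ip_antisymm hA hBs hsub (by rw [hemp]; exact empty_subset _)
    rw [hAB]
  | succ N ih =>
    intro A Bs hA hBs hcard hsub
    by_cases hq : IP M (· < ·) A ⊆ Bs
    · rw [acs_ip_antisymm hA hBs hsub hq]
    · obtain ⟨a, haIP, haBs⟩ := not_subset.1 hq
      obtain ⟨b₀, hb₀n, hb₀lt, hbase, hIPsub⟩ := acs_ip_down hE hA haIP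
      have hsub1 : IP M (· < ·) Bs ⊆ insert b₀ (A \ {a}) := by
        intro x hx
        have hxa : x ≠ a := fun h => haBs (h ▸ hx.1)
        exact mem_insert_of_mem _ ⟨hsub hx, hxa⟩
      have hcard1 : (IP M (· < ·) (insert b₀ (A \ {a}))).ncard ≤ N := by
        have h5 := ncard_le_ncard hIPsub (Set.toFinite _)
        have h6 : (IP M (· < ·) A \ {a}).ncard = (IP M (· < ·) A).ncard - 1 :=
          ncard_diff_singleton_of_mem haIP
        have h7 : 0 < (IP M (· < ·) A).ncard :=
          (ncard_pos (Set.toFinite _)).2 ⟨a, haIP⟩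
        omega
      exact (ih _ Bs hbase hBs hcard1 hsub1).trans (hIPsub.trans diff_subset)

end ACS

theorem linear_extension_of_internal_order_is_shelling
    {α : Type*} [Fintype α] [LinearOrder α]
    (M : Matroid α) (hE : M.E = Set.univ)
    {n : ℕ} (B : Fin n → Set α) (hB : EnumeratesBases M B)
    (hext : ∀ i j : Fin n, IP M (· < ·) (B i) ⊂ IP M (· < ·) (B j) → i < j) :
    IsShelling B := by
  obtain ⟨hinj, hbase, hsurj⟩ := hB
  intro i j hij
  have hne : B i ≠ B j := fun h => (ne_of_lt hij) (hinj h)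
  have hIPsubB : ∀ m : Fin n, IP M (· < ·) (B m) ⊆ B m := fun m x hx => hx.1
  have hnotsub : ¬ IP M (· < ·) (B j) ⊆ IP M (· < ·) (B i) := by
    intro hsub
    by_cases h2 : IP M (· < ·) (B i) ⊆ IP M (· < ·) (B j)
    · exact hne (acs_ip_antisymm (hbase i) (hbase j)
        (hsub.trans (hIPsubB i)) (h2.trans (hIPsubB j)))
    · exact absurd (hext j i ⟨hsub, h2⟩) (not_lt.2 (le_of_lt hij))
  have hnotA : ¬ IP M (· < ·) (B j) ⊆ B i := fun h =>
    hnotsub (acs_ip_mono hE _ (B i) (B j) (hbase i) (hbase j) le_rfl h)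
  obtain ⟨b, hbIP, hbA⟩ := Set.not_subset.1 hnotA
  obtain ⟨b₀, hb₀n, hb₀lt, hbaseC, hIPsub⟩ := acs_ip_down hE (hbase j) hbIP
  obtain ⟨k, hk⟩ := hsurj _ hbaseC
  have hssub : IP M (· < ·) (B k) ⊂ IP M (· < ·) (B j) := by
    rw [hk]
    refine HasSubset.Subset.ssubset_of_ne (hIPsub.trans diff_subset) ?_
    intro hcon
    exact (hIPsub (hcon ▸ hbIP)).2 rfl
  have hint : B k ∩ B j = B j \ {b} := by
    rw [hk]
    ext x
    constructor
    · rintro ⟨(rfl | hx), hxj⟩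
      · exact absurd hxj hb₀n
      · exact hx
    · exact fun hx => ⟨Set.mem_insert_of_mem _ hx, hx.1⟩
  refine ⟨k, hext k j hssub, ?_, ?_⟩
  · intro x hx
    have hxb : x ≠ b := fun h => hbA (h ▸ (⟨hx.1, rfl⟩ : x ∈ B i ∧ x = x).1)
    rw [hint]
    exact ⟨hx.2, hxb⟩
  · rw [hint, Set.ncard_diff_singleton_of_mem hbIP.1]
end

section
/- Let M be a matroid on a finite ground set E with a linear order < on E. Let B₁, …, B_s be distinct bases of M such that (i) the partial shelling condition holds: for all 1 ≤ i < j ≤ s there is k < j with B_i ∩ B_j ⊆ B_k ∩ B_j and |B_k ∩ B_j| = |B_j| − 1, and (ii) the set {B₁, …, B_s} is an order ideal of Int_<(M): whenever B is a basis with IP_<(B) ⊆ IP_<(B_i) for some i ≤ s, then B ∈ {B₁, …, B_s}. Then there exists an enumeration B_{s+1}, …, B_t of the remaining bases of M such that B₁, …, B_s, B_{s+1}, …, B_t is a shelling order of the independence complex I(M). (Corollary 5 (cor:extend): partial shellings that are order ideals of the internal order are extendable.) -/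
section Aux

open Set

variable {α : Type*} [Fintype α] [LinearOrder α] {M : Matroid α}
  {A B D : Set α} {b x y w e d : α}

lemma IP_subset (M : Matroid α) (lt : α → α → Prop) (B : Set α) : IP M lt B ⊆ B :=
  fun _ hb => hb.1

/-- Basis exchange in terms of closure. -/
lemma exch_iff (hE : M.E = Set.univ) (hB : M.IsBase B) (hb : b ∈ B) (hy : y ∉ B) :
    M.IsBase (insert y (B \ {b})) ↔ y ∉ M.closure (B \ {b}) := by
  constructor
  · intro h
    have h1 := h.indep.notMem_closure_diff_of_mem (mem_insert _ _)
    rwa [insert_diff_self_of_notMem (fun hc : y ∈ B \ {b} => hy hc.1)] at h1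
  · intro h
    have hind : M.Indep (B \ {b}) := hB.indep.subset diff_subset
    have hins : M.Indep (insert y (B \ {b})) := by
      rw [hind.insert_indep_iff_of_notMem (fun hc : y ∈ B \ {b} => hy hc.1)]
      exact ⟨hE ▸ mem_univ y, h⟩
    exact hB.exchange_isBase_of_indep hy hins

/-- If `w` is in the closure of `I` and in the closure of `I \ {c}` for each `c ∈ Y`,
then `w` is in the closure of `I \ Y`. -/
lemma mem_closure_diff_of_forall (hI : M.Indep I) (hw : w ∈ M.closure I) (Y : Set α)
    (hY : Y ⊆ I) (h : ∀ c ∈ Y, w ∈ M.closure (I \ {c})) : w ∈ M.closure (I \ Y) := by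
  revert hY h
  refine Set.Finite.induction_on (motive := fun Y _ =>
      Y ⊆ I → (∀ c ∈ Y, w ∈ M.closure (I \ {c})) → w ∈ M.closure (I \ Y))
    Y (Set.toFinite Y) (fun _ _ => by simpa using hw) ?_
  rintro a Y' ha hY'fin IH hY h
  · have h1 : w ∈ M.closure (I \ Y') :=
      IH ((subset_insert a Y').trans hY) (fun c hc => h c (mem_insert_of_mem a hc))
    have h2 : w ∈ M.closure (I \ {a}) := h a (mem_insert a Y')
    have hu : M.Indep ((I \ Y') ∪ (I \ {a})) :=
      hI.subset (union_subset diff_subset diff_subset)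
    have := hu.closure_inter_eq_inter_closure
    have hmem : w ∈ M.closure ((I \ Y') ∩ (I \ {a})) := by
      rw [this]; exact ⟨h1, h2⟩
    rwa [diff_inter_diff, union_comm, ← Set.insert_eq] at hmem

/-- `w ∉ B` lies in the closure of the set of elements of `B` it can be exchanged with. -/
lemma mem_closure_exchSet (hE : M.E = Set.univ) (hB : M.IsBase B) (hw : w ∉ B) :
    w ∈ M.closure {c | c ∈ B ∧ w ∉ M.closure (B \ {c})} := by
  have hw0 : w ∈ M.closure B := by rw [hB.closure_eq, hE]; exact mem_univ w
  have hY : {c | c ∈ B ∧ w ∈ M.closure (B \ {c})} ⊆ B := fun c hc => hc.1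
  have := mem_closure_diff_of_forall hB.indep hw0 _ hY (fun c hc => hc.2)
  have heq : B \ {c | c ∈ B ∧ w ∈ M.closure (B \ {c})} =
      {c | c ∈ B ∧ w ∉ M.closure (B \ {c})} := by
    ext c; simp only [mem_diff, mem_setOf_eq]; tauto
  rwa [heq] at this

/-- Key auxiliary: the minimum of the symmetric difference cannot be on the `A` side when
`IP M (<) B ⊆ A`. -/
lemma aux_min (hE : M.E = Set.univ) (hA : M.IsBase A) (hB : M.IsBase B)
    (hIP : IP M (· < ·) B ⊆ A) (hxA : x ∈ A) (hxB : x ∉ B)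
    (hmin : ∀ z ∈ (A \ B) ∪ (B \ A), x ≤ z) : False := by
  have hXcl := mem_closure_exchSet hE hB hxB
  have hXA : {c | c ∈ B ∧ x ∉ M.closure (B \ {c})} ⊆ A \ {x} := by
    rintro c ⟨hcB, hccl⟩
    have hcx : c ≠ x := fun h => hxB (h ▸ hcB)
    by_cases hcA : c ∈ A
    · exact ⟨hcA, hcx⟩
    · exfalso
      have hxc : x < c := lt_of_le_of_ne (hmin c (Or.inr ⟨hcB, hcA⟩)) (Ne.symm hcx)
      exact hcA (hIP ⟨hcB, x, hxB, hxc, (exch_iff hE hB hcB hxB).mpr hccl⟩)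
  exact hA.indep.notMem_closure_diff_of_mem hxA ((M.closure_subset_closure hXA) hXcl)

/-- L1: a basis is determined by its internally passive set. -/
lemma IP_inj (hE : M.E = Set.univ) (hA : M.IsBase A) (hB : M.IsBase B)
    (h : IP M (· < ·) A = IP M (· < ·) B) : A = B := by
  by_contra hne
  have hsd : ((A \ B) ∪ (B \ A)).Nonempty := by
    rw [Set.nonempty_iff_ne_empty]
    intro hc
    rw [Set.union_empty_iff, diff_eq_empty, diff_eq_empty] at hc
    exact hne (hc.1.antisymm hc.2)
  obtain ⟨x, hx, hmin⟩ := Set.exists_min_image _ id (Set.toFinite _) hsd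
  rcases hx with hx | hx
  · exact aux_min hE hA hB (h ▸ IP_subset M _ A) hx.1 hx.2 hmin
  · refine aux_min hE hB hA (h ▸ IP_subset M _ B) hx.1 hx.2 ?_
    intro z hz
    exact hmin z (hz.elim Or.inr Or.inl)

/-- M1': if the internally passive set of `B` is contained in a basis `A`, it is contained
in the internally passive set of `A`. -/
lemma IP_mono (hE : M.E = Set.univ) (hA : M.IsBase A) (hB : M.IsBase B)
    (hIP : IP M (· < ·) B ⊆ A) : IP M (· < ·) B ⊆ IP M (· < ·) A := by
  intro b hb
  obtain ⟨hbB, w, hwB, hwb, hDbase⟩ := hb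
  have hbA : b ∈ A := hIP ⟨hbB, w, hwB, hwb, hDbase⟩
  have hwcl : w ∉ M.closure (B \ {b}) := (exch_iff hE hB hbB hwB).mp hDbase
  by_contra hbIPA
  have hH : ∀ z, z < b → z ∈ M.closure (A \ {b}) := by
    intro z hz
    by_cases hzA : z ∈ A
    · exact M.subset_closure _ (hE ▸ subset_univ _) ⟨hzA, fun h => absurd (h ▸ hz) (lt_irrefl b)⟩
    · by_contra hzcl
      exact hbIPA ⟨hbA, z, hzA, hz, (exch_iff hE hA hbA hzA).mpr hzcl⟩
  set X := {c | c ∈ B ∧ w ∉ M.closure (B \ {c})} with hXdef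
  have hwX : w ∈ M.closure X := mem_closure_exchSet hE hB hwB
  have hXB : X ⊆ B := fun c hc => hc.1
  by_cases hXH : ∀ c ∈ X, c ≠ b → c ∈ M.closure (A \ {b})
  · have h1 : X ⊆ insert b (X \ {b}) := by
      intro c hc
      by_cases hcb : c = b
      · exact hcb ▸ mem_insert _ _
      · exact mem_insert_of_mem _ ⟨hc, hcb⟩
    have hw2 : w ∈ M.closure (insert b (X \ {b})) := M.closure_subset_closure h1 hwX
    have hw3 : w ∉ M.closure (X \ {b}) := fun h =>
      hwcl (M.closure_subset_closure (diff_subset_diff_left hXB) h)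
    have hex := Matroid.closure_exchange (M := M) ⟨hw2, hw3⟩
    have hsub : insert w (X \ {b}) ⊆ M.closure (A \ {b}) :=
      insert_subset (hH w hwb) (fun c hc => hXH c hc.1 hc.2)
    have hbcl : b ∈ M.closure (A \ {b}) := by
      have := M.closure_subset_closure_of_subset_closure hsub
      exact this hex.1
    exact hA.indep.notMem_closure_diff_of_mem hbA hbcl
  · push_neg at hXH
    obtain ⟨c, hcX, hcb, hcH⟩ := hXH
    have hcB : c ∈ B := hcX.1
    have hbc : b < c := by
      rcases lt_trichotomy c b with h | h | h
      · exact absurd (hH c h) hcH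
      · exact absurd h hcb
      · exact h
    have hcA : c ∉ A := fun hcA =>
      hcH (M.subset_closure _ (hE ▸ subset_univ _) ⟨hcA, hcb⟩)
    exact hcA (hIP ⟨hcB, w, hwB, hwb.trans hbc, (exch_iff hE hB hcB hwB).mpr hcX.2⟩)

/-- CanEx: the canonical exchange of an internally passive element strictly decreases
the internally passive set. -/
lemma canex (hE : M.E = Set.univ) (hB : M.IsBase B) (hx : x ∈ IP M (· < ·) B) :
    ∃ D, M.IsBase D ∧ D ∩ B = B \ {x} ∧ IP M (· < ·) D ⊆ IP M (· < ·) B \ {x} := by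
  obtain ⟨hxB, y0, hy0B, hy0x, hy0base⟩ := hx
  have hy0cl : y0 ∉ M.closure (B \ {x}) := (exch_iff hE hB hxB hy0B).mp hy0base
  set S0 := {z | z ∉ M.closure (B \ {x})} with hS0def
  obtain ⟨y, hyS0, hymin⟩ := Set.exists_min_image S0 id (Set.toFinite _) ⟨y0, hy0cl⟩
  have hyx : y < x := lt_of_le_of_lt (hymin y0 hy0cl) hy0x
  have hyB : y ∉ B := by
    intro hyB'
    rcases eq_or_ne y x with h | h
    · exact absurd h (ne_of_lt hyx)
    · exact hyS0 (M.subset_closure _ (hE ▸ subset_univ _) ⟨hyB', h⟩)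
  have hDbase : M.IsBase (insert y (B \ {x})) := (exch_iff hE hB hxB hyB).mpr hyS0
  set D := insert y (B \ {x}) with hDdef
  have hxD : x ∉ D := by
    intro h
    rcases mem_insert_iff.mp h with h | h
    · exact absurd h (ne_of_lt hyx).symm
    · exact h.2 rfl
  refine ⟨D, hDbase, ?_, ?_⟩
  · ext z
    simp only [hDdef, mem_inter_iff, mem_insert_iff, mem_diff, mem_singleton_iff]
    constructor
    · rintro ⟨h1 | h1, h2⟩
      · exact absurd h2 (h1 ▸ hyB)
      · exact h1
    · rintro ⟨h1, h2⟩
      exact ⟨Or.inr ⟨h1, h2⟩, h1⟩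
  · rintro d ⟨hdD, e, heD, hed, hebase⟩
    have hdne_x : d ≠ x := fun h => hxD (h ▸ hdD)
    have hecl : e ∉ M.closure (D \ {d}) := (exch_iff hE hDbase hdD heD).mp hebase
    rcases eq_or_ne d y with rfl | hdy
    · exfalso
      have hDy : D \ {d} = B \ {x} := insert_diff_self_of_notMem
        (fun hc : d ∈ B \ {x} => hyB hc.1)
      rw [hDy] at hecl
      exact absurd (hymin e hecl) (not_le.mpr hed)
    · -- d ∈ B \ {x}
      have hdBx : d ∈ B \ {x} := by
        rcases (mem_insert_iff.mp (hDdef ▸ hdD)) with h | h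
        · exact absurd h hdy
        · exact h
      have hdB : d ∈ B := hdBx.1
      set K := B \ {x, d} with hKdef
      have idA : B \ {d} = insert x K := by
        ext z
        simp only [hKdef, mem_diff, mem_insert_iff, mem_singleton_iff]
        constructor
        · rintro ⟨h1, h2⟩
          rcases eq_or_ne z x with h | h
          · exact Or.inl h
          · exact Or.inr ⟨h1, by tauto⟩
        · rintro (rfl | ⟨h1, h2⟩)
          · exact ⟨hxB, hdne_x.symm⟩
          · exact ⟨h1, by tauto⟩
      have hyd' : y ≠ d := Ne.symm hdy
      have idB : D \ {d} = insert y K := by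
        ext z
        simp only [hDdef, hKdef, mem_diff, mem_insert_iff, mem_singleton_iff, not_or]
        constructor
        · rintro ⟨h1 | h1, h2⟩
          · exact Or.inl h1
          · exact Or.inr ⟨h1.1, h1.2, h2⟩
        · rintro (rfl | ⟨h1, h2, h3⟩)
          · exact ⟨Or.inl rfl, hyd'⟩
          · exact ⟨Or.inr ⟨h1, h2⟩, h3⟩
      have idC : B \ {x} = insert d K := by
        ext z
        simp only [hKdef, mem_diff, mem_insert_iff, mem_singleton_iff]
        constructor
        · rintro ⟨h1, h2⟩
          rcases eq_or_ne z d with h | h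
          · exact Or.inl h
          · exact Or.inr ⟨h1, by tauto⟩
        · rintro (rfl | ⟨h1, h2⟩)
          · exact ⟨hdB, hdne_x⟩
          · exact ⟨h1, by tauto⟩
      have he1 : e ∉ M.closure (insert y K) := idB ▸ hecl
      have heK : e ∉ M.closure K :=
        fun h => he1 (M.closure_subset_closure (subset_insert _ _) h)
      by_cases h2 : e ∈ M.closure (insert x K)
      · -- use y as the witness
        have claim1 : e ∉ M.closure (insert d K) := by
          intro h3
          have hex1 := Matroid.closure_exchange (M := M) ⟨h3, heK⟩
          have hex2 := Matroid.closure_exchange (M := M) ⟨h2, heK⟩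
          have hcleq : M.closure (insert e K) ⊆ M.closure (insert x K) := by
            apply M.closure_subset_closure_of_subset_closure
            exact insert_subset h2 ((M.subset_closure _ (hE ▸ subset_univ _)).trans
              (M.closure_subset_closure (subset_insert _ _)))
          have hd_in : d ∈ M.closure (insert x K) := hcleq hex1.1
          rw [← idA] at hd_in
          exact hB.indep.notMem_closure_diff_of_mem hdB hd_in
        have heS0 : e ∈ S0 := by rw [hS0def]; exact fun h => claim1 (idC ▸ h)
        have hye : y ≤ e := hymin e heS0
        have hyd : y < d := lt_of_le_of_lt hye hed
        have claim2 : y ∉ M.closure (insert x K) := by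
          intro h4
          have hyK : y ∉ M.closure K := by
            intro h
            exact hyS0 (idC ▸ (M.closure_subset_closure (subset_insert _ _) h))
          have hex3 := Matroid.closure_exchange (M := M) ⟨h4, hyK⟩
          have hcleq : M.closure (insert x K) ⊆ M.closure (insert y K) := by
            apply M.closure_subset_closure_of_subset_closure
            exact insert_subset hex3.1 ((M.subset_closure _ (hE ▸ subset_univ _)).trans
              (M.closure_subset_closure (subset_insert _ _)))
          exact he1 (hcleq h2)
        rw [← idA] at claim2
        exact ⟨⟨hdB, y, hyB, hyd, (exch_iff hE hB hdB hyB).mpr claim2⟩, hdne_x⟩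
      · -- use e as the witness
        rw [← idA] at h2
        have heB : e ∉ B := by
          intro heB'
          rcases eq_or_ne e x with rfl | h
          · exact h2 (M.subset_closure _ (hE ▸ subset_univ _) ⟨heB', hdne_x.symm⟩)
          · exact heD (hDdef ▸ mem_insert_of_mem _ ⟨heB', h⟩)
        exact ⟨⟨hdB, e, heB, hed, (exch_iff hE hB hdB heB).mpr h2⟩, hdne_x⟩

end Aux

theorem order_ideal_partial_shelling_extends
    {α : Type*} [Fintype α] [LinearOrder α]
    (M : Matroid α) (hE : M.E = Set.univ)
    {s : ℕ} (B : Fin s → Set α)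
    (hbase : ∀ i, M.IsBase (B i)) (hinj : Function.Injective B)
    (hpartial : IsShelling B)
    (hideal : ∀ C : Set α, M.IsBase C →
      (∃ i : Fin s, IP M (· < ·) C ⊆ IP M (· < ·) (B i)) → ∃ i : Fin s, B i = C) :
    ∃ (t : ℕ) (hst : s ≤ t) (C : Fin t → Set α),
      EnumeratesBases M C ∧ IsShelling C ∧
        ∀ i : Fin s, C (Fin.castLE hst i) = B i := by
  classical
  letI : Fintype (Set α) := Fintype.ofFinite _
  set N := Fintype.card (Set α) with hN
  have hN0 : 0 < N := Fintype.card_pos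
  set enc := Fintype.equivFin (Set α) with henc
  set key : Set α → ℕ := fun C => N * (IP M (· < ·) C).ncard + (enc C : ℕ) with hkey
  have key_inj : ∀ C D : Set α, key C = key D → C = D := by
    intro C D h
    have h1 : (enc C : ℕ) = (enc D : ℕ) := by
      have := congrArg (· % N) h
      simpa [hkey, Nat.mul_add_mod, Nat.mod_eq_of_lt (enc C).isLt,
        Nat.mod_eq_of_lt (enc D).isLt, hN] using this
    exact enc.injective (Fin.ext h1)
  have key_lt : ∀ C D : Set α, IP M (· < ·) C ⊂ IP M (· < ·) D → key C < key D := by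
    intro C D h
    have h1 : (IP M (· < ·) C).ncard < (IP M (· < ·) D).ncard :=
      Set.ncard_lt_ncard h (Set.toFinite _)
    calc key C < N * ((IP M (· < ·) C).ncard + 1) := by
          simp only [hkey, Nat.mul_add, Nat.mul_one]
          exact Nat.add_lt_add_left (enc C).isLt _
      _ ≤ N * (IP M (· < ·) D).ncard := Nat.mul_le_mul_left _ h1
      _ ≤ key D := Nat.le_add_right _ _
  -- the remaining bases
  set R : Set (Set α) := {C | M.IsBase C ∧ C ∉ Set.range B} with hR
  set F : Finset (Set α) := (Set.toFinite R).toFinset with hF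
  set r : Set α → Set α → Prop := fun C D => key C ≤ key D with hr
  haveI : IsTrans (Set α) r := ⟨fun _ _ _ h1 h2 => le_trans h1 h2⟩
  haveI : Std.Antisymm r := ⟨fun C D h1 h2 => key_inj C D (le_antisymm h1 h2)⟩
  haveI : Std.Total r := ⟨fun C D => le_total (key C) (key D)⟩
  haveI : DecidableRel r := fun C D => inferInstanceAs (Decidable (key C ≤ key D))
  set l : List (Set α) := F.sort r with hl
  have hlmem : ∀ {C : Set α}, C ∈ l ↔ (M.IsBase C ∧ C ∉ Set.range B) := by
    intro C
    rw [hl, Finset.mem_sort, hF, Set.Finite.mem_toFinset]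
    exact Iff.rfl
  have hlnodup : l.Nodup := F.sort_nodup r
  have hlsorted : l.Pairwise r := F.pairwise_sort r
  have key_mono : ∀ (m m' : Fin l.length), (m : ℕ) < (m' : ℕ) →
      key (l.get m) ≤ key (l.get m') :=
    fun m m' h => hlsorted.rel_get_of_lt h
  set CC : Fin (s + l.length) → Set α := fun i =>
    if h : (i : ℕ) < s then B ⟨i, h⟩ else l.get ⟨(i : ℕ) - s, by omega⟩ with hCC
  have hCCs : ∀ (i : Fin (s + l.length)) (h : (i : ℕ) < s), CC i = B ⟨i, h⟩ := by
    intro i h; simp only [hCC]; rw [dif_pos h]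
  have hCCl : ∀ (i : Fin (s + l.length)) (h : ¬ (i : ℕ) < s) (h2 : (i : ℕ) - s < l.length),
      CC i = l.get ⟨(i : ℕ) - s, h2⟩ := by
    intro i h h2; simp only [hCC]; rw [dif_neg h]
  have hbases : ∀ i, M.IsBase (CC i) := by
    intro i
    by_cases h : (i : ℕ) < s
    · rw [hCCs i h]; exact hbase _
    · rw [hCCl i h (by omega)]; exact (hlmem.mp (List.get_mem _ _)).1
  have hinj' : Function.Injective CC := by
    intro i j hij
    by_cases hi : (i : ℕ) < s <;> by_cases hj : (j : ℕ) < s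
    · rw [hCCs i hi, hCCs j hj] at hij
      exact Fin.ext (Fin.mk_eq_mk.mp (hinj hij))
    · rw [hCCs i hi, hCCl j hj (by omega)] at hij
      exact absurd ⟨⟨i, hi⟩, hij⟩ ((hlmem.mp (List.get_mem _ _)).2)
    · rw [hCCl i hi (by omega), hCCs j hj] at hij
      exact absurd ⟨⟨j, hj⟩, hij.symm⟩ ((hlmem.mp (List.get_mem _ _)).2)
    · rw [hCCl i hi (by omega), hCCl j hj (by omega)] at hij
      have h3 := (hlnodup.get_inj_iff).mp hij
      have h2 : (i : ℕ) - s = (j : ℕ) - s := congrArg Fin.val h3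
      exact Fin.ext (by omega)
  have hfind : ∀ (j : Fin (s + l.length)), ¬ (j : ℕ) < s →
      ∀ D : Set α, M.IsBase D → key D < key (CC j) →
      ∃ k : Fin (s + l.length), (k : ℕ) < (j : ℕ) ∧ CC k = D := by
    intro j hj D hD hkey
    have hjl : (j : ℕ) - s < l.length := by omega
    have hCj : CC j = l.get ⟨(j : ℕ) - s, hjl⟩ := hCCl j hj hjl
    by_cases hDr : D ∈ Set.range B
    · obtain ⟨i0, hi0⟩ := hDr
      refine ⟨⟨(i0 : ℕ), by omega⟩, by simp only [Fin.val_mk]; omega, ?_⟩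
      rw [hCCs _ (by simpa using i0.isLt)]
      exact hi0
    · have hDl : D ∈ l := hlmem.mpr ⟨hD, hDr⟩
      obtain ⟨⟨m, hm⟩, hgm⟩ := List.mem_iff_get.mp hDl
      have hmlt : m < (j : ℕ) - s := by
        by_contra hge
        push_neg at hge
        rcases eq_or_lt_of_le hge with heq | hlt
        · have hjD : CC j = D := by
            rw [hCj, ← hgm]
            congr 1
            exact Fin.ext heq
          rw [hjD] at hkey
          exact lt_irrefl _ hkey
        · have hmono := key_mono ⟨(j : ℕ) - s, hjl⟩ ⟨m, hm⟩ hlt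
          rw [← hCj, hgm] at hmono
          exact absurd hkey (not_lt.mpr hmono)
      refine ⟨⟨s + m, by omega⟩, by simp only [Fin.val_mk]; omega, ?_⟩
      rw [hCCl _ (by simp only [Fin.val_mk]; omega) (by simp only [Fin.val_mk]; omega), ← hgm]
      congr 1
      exact Fin.ext (by simp only [Fin.val_mk]; omega)
  refine ⟨s + l.length, Nat.le_add_right _ _, CC, ⟨hinj', hbases, ?_⟩, ?_, ?_⟩
  rotate_right
  · -- restriction to the first `s`
    intro i
    rw [hCCs _ (by simpa using i.isLt)]
    exact congrArg B (Fin.ext (by simp))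
  · -- surjectivity onto the bases
    intro C hC
    by_cases hCr : C ∈ Set.range B
    · obtain ⟨i0, hi0⟩ := hCr
      refine ⟨⟨(i0 : ℕ), by omega⟩, ?_⟩
      rw [hCCs _ (by simpa using i0.isLt)]
      exact hi0
    · have hCl : C ∈ l := hlmem.mpr ⟨hC, hCr⟩
      obtain ⟨⟨m, hm⟩, hgm⟩ := List.mem_iff_get.mp hCl
      refine ⟨⟨s + m, by omega⟩, ?_⟩
      rw [hCCl _ (by simp only [Fin.val_mk]; omega) (by simp only [Fin.val_mk]; omega), ← hgm]
      congr 1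
      exact Fin.ext (by simp only [Fin.val_mk]; omega)
  · -- the shelling property
    intro i j hij
    have hij' : (i : ℕ) < (j : ℕ) := hij
    by_cases hj : (j : ℕ) < s
    · have hi : (i : ℕ) < s := lt_trans hij' hj
      obtain ⟨k, hk, hsub, hcard⟩ := hpartial ⟨i, hi⟩ ⟨j, hj⟩ hij'
      refine ⟨⟨(k : ℕ), by omega⟩, hk, ?_, ?_⟩
      · rw [hCCs i hi, hCCs j hj, hCCs _ (by simpa using k.isLt)]
        exact hsub
      · rw [hCCs j hj, hCCs _ (by simpa using k.isLt)]
        exact hcard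
    · -- j is in the tail
      have hjl : (j : ℕ) - s < l.length := by omega
      have hCj : CC j = l.get ⟨(j : ℕ) - s, hjl⟩ := hCCl j hj hjl
      have hBj : M.IsBase (CC j) := hbases j
      have hBjr : CC j ∉ Set.range B := by
        rw [hCj]; exact (hlmem.mp (List.get_mem _ _)).2
      have hA : M.IsBase (CC i) := hbases i
      have hAne : CC i ≠ CC j := fun h => (Fin.ne_of_lt hij) (hinj' h)
      by_cases hsub : IP M (· < ·) (CC j) ⊆ CC i
      · exfalso
        have h2 : IP M (· < ·) (CC j) ⊆ IP M (· < ·) (CC i) := IP_mono hE hA hBj hsub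
        by_cases hi : (i : ℕ) < s
        · obtain ⟨i0, hi0⟩ := hideal (CC j) hBj ⟨⟨i, hi⟩, by rw [← hCCs i hi]; exact h2⟩
          exact hBjr ⟨i0, hi0⟩
        · have hil : (i : ℕ) - s < l.length := by omega
          have hCi : CC i = l.get ⟨(i : ℕ) - s, hil⟩ := hCCl i hi hil
          have hle : key (CC i) ≤ key (CC j) := by
            rw [hCi, hCj]
            exact key_mono _ _ (by simp only [Fin.val_mk]; omega)
          by_cases heq : IP M (· < ·) (CC j) = IP M (· < ·) (CC i)
          · exact hAne (IP_inj hE hA hBj heq.symm)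
          · have hss : IP M (· < ·) (CC j) ⊂ IP M (· < ·) (CC i) :=
              ssubset_of_subset_of_ne h2 heq
            exact absurd (key_lt _ _ hss) (not_lt.mpr hle)
      · obtain ⟨x, hxIP, hxA⟩ := Set.not_subset.mp hsub
        obtain ⟨D, hDbase, hDcap, hDIP⟩ := canex hE hBj hxIP
        have hxBj : x ∈ CC j := hxIP.1
        have hDssub : IP M (· < ·) D ⊂ IP M (· < ·) (CC j) :=
          ⟨hDIP.trans Set.diff_subset, fun hcon => (hDIP (hcon hxIP)).2 rfl⟩
        have hkeylt : key D < key (CC j) := key_lt _ _ hDssub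
        obtain ⟨k, hkj, hCk⟩ := hfind j hj D hDbase hkeylt
        refine ⟨k, hkj, ?_, ?_⟩
        · rw [hCk, hDcap]
          intro z hz
          exact ⟨hz.2, fun h => hxA (h ▸ hz.1)⟩
        · rw [hCk, hDcap]
          rw [Set.ncard_diff_singleton_of_mem hxBj]
end

section
/- Let M be a matroid on a finite ground set E and let B₁, …, Bₙ be an enumeration of all the bases of M such that for every i = 1, …, n there exists a generic function ℓᵢ : E → ℝ with the property that ℓᵢ(B_j) < ℓᵢ(B_i) if and only if j < i. Then B₁, …, Bₙ is a shelling order of the independence complex I(M). (Lemma 6.1 (lem:broken), shelling part: broken line orders are shelling orders.) -/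
/-!
STATEMENT 7 (Lemma `lem:broken`, shelling part): an enumeration of all the
bases which is a broken line order (for each `i` some generic `ℓᵢ` puts exactly
the bases preceding `Bᵢ` strictly below `Bᵢ` in weight) is a shelling order of
the independence complex.
-/

open scoped BigOperators

open Set

/-- wt as a finset sum. -/
lemma wt_eq_sum {α : Type*} (ℓ : α → ℝ) (A : Set α) (hA : A.Finite) :
    wt ℓ A = ∑ x ∈ hA.toFinset, ℓ x := by
  rw [wt, ← finsum_mem_coe_finset, Set.Finite.coe_toFinset]

lemma wt_insert_diff {α : Type*} [Fintype α] (ℓ : α → ℝ) {A : Set α} {e f : α}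
    (he : e ∈ A) (hf : f ∉ A) :
    wt ℓ (insert f (A \ {e})) = wt ℓ A - ℓ e + ℓ f := by
  classical
  have hA : A.Finite := A.toFinite
  have hA' : (insert f (A \ {e})).Finite := Set.toFinite _
  rw [wt_eq_sum ℓ _ hA', wt_eq_sum ℓ A hA]
  have h1 : hA'.toFinset = insert f (hA.toFinset.erase e) := by
    ext x
    simp only [Set.Finite.mem_toFinset, Set.mem_insert_iff, Set.mem_diff, Set.mem_singleton_iff,
      Finset.mem_insert, Finset.mem_erase]
    tauto
  rw [h1, Finset.sum_insert (by simp only [Finset.mem_erase, Set.Finite.mem_toFinset]; exact fun h => hf h.2)]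
  rw [Finset.sum_erase_eq_sub (by simpa only [Set.Finite.mem_toFinset] using he)]
  ring

/-- Symmetric basis exchange. -/
lemma sym_exchange {α : Type*} (M : Matroid α) {B₁ B₂ : Set α}
    (hB₁ : M.IsBase B₁) (hB₂ : M.IsBase B₂) {e : α} (he : e ∈ B₁ \ B₂) :
    ∃ f ∈ B₂ \ B₁, M.IsBase (insert f (B₁ \ {e})) ∧ M.IsBase (insert e (B₂ \ {f})) := by
  classical
  set S : Set α := {f ∈ B₂ | e ∉ M.closure (B₂ \ {f})} with hSdef
  have heE : e ∈ M.E := hB₁.subset_ground he.1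
  have heS : e ∈ M.closure S := by
    by_cases hT : (B₂ \ S).Nonempty
    · set Js : Set (Set α) := {J | ∃ f ∈ B₂ \ S, J = B₂ \ {f}} with hJsdef
      have hJs : Js.Nonempty := by
        obtain ⟨f, hf⟩ := hT; exact ⟨B₂ \ {f}, f, hf, rfl⟩
      have hsub : ∀ J ∈ Js, J ⊆ B₂ := by
        rintro J ⟨f, -, rfl⟩; exact diff_subset
      have hkey := hB₂.indep.closure_sInter_eq_biInter_closure_of_forall_subset hJs hsub
      have hinter : ⋂₀ Js ⊆ S := by
        intro x hx
        have hxB₂ : x ∈ B₂ := hsub _ hJs.some_mem (hx _ hJs.some_mem)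
        by_contra hxS
        exact (hx _ ⟨x, ⟨hxB₂, hxS⟩, rfl⟩).2 rfl
      have hecl : e ∈ M.closure (⋂₀ Js) := by
        rw [hkey]
        simp only [mem_iInter]
        rintro J ⟨f, hf, rfl⟩
        by_contra h
        exact hf.2 ⟨hf.1, h⟩
      exact M.closure_subset_closure hinter hecl
    · have hSB : S = B₂ := subset_antisymm (fun x hx => hx.1)
        (fun f hf => by_contra fun h => hT ⟨f, hf, h⟩)
      rw [hSB, hB₂.closure_eq]
      exact heE
  have hnot : ¬ S ⊆ M.closure (B₁ \ {e}) := by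
    intro hsub
    exact hB₁.indep.notMem_closure_sdiff_of_mem he.1
      (M.closure_subset_closure_of_subset_closure hsub heS)
  obtain ⟨f, hfS, hfcl⟩ := not_subset.1 hnot
  have hfB₂ : f ∈ B₂ := hfS.1
  have hfE : f ∈ M.E := hB₂.subset_ground hfB₂
  have hfB₁ : f ∉ B₁ := by
    intro h
    have hfe : f ≠ e := by rintro rfl; exact he.2 hfB₂
    exact hfcl (M.mem_closure_of_mem ⟨h, hfe⟩ (diff_subset.trans hB₁.subset_ground))
  have hI1 : M.Indep (insert f (B₁ \ {e})) := by
    rw [(hB₁.indep.subset diff_subset).insert_indep_iff_of_notMem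
      (fun h => hfB₁ h.1)]
    exact ⟨hfE, hfcl⟩
  have hI2 : M.Indep (insert e (B₂ \ {f})) := by
    rw [(hB₂.indep.subset diff_subset).insert_indep_iff_of_notMem
      (fun h => he.2 h.1)]
    exact ⟨heE, hfS.2⟩
  exact ⟨f, ⟨hfB₂, hfB₁⟩, hB₁.exchange_isBase_of_indep hfB₁ hI1,
    hB₂.exchange_isBase_of_indep he.2 hI2⟩

/-- Local optimality with respect to exchanges removing elements of `D` implies
global optimality among bases `B'` with `B'' \ B' ⊆ D`. -/
lemma local_to_global {α : Type*} [Fintype α] (M : Matroid α) (ℓ : α → ℝ)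
    {B'' : Set α} (hB'' : M.IsBase B'') {D : Set α}
    (hloc : ∀ e ∈ D, ∀ f ∉ B'', M.IsBase (insert f (B'' \ {e})) → ℓ e < ℓ f) :
    ∀ m : ℕ, ∀ B' : Set α, M.IsBase B' → (B'' \ B').ncard = m → B'' \ B' ⊆ D →
      wt ℓ B'' ≤ wt ℓ B' := by
  intro m
  induction m using Nat.strong_induction_on with
  | _ m ih =>
    intro B' hB' hcard hD
    rcases Set.eq_empty_or_nonempty (B'' \ B') with hempty | ⟨e, he⟩
    · have : B'' = B' := hB''.eq_of_subset_isBase hB' (diff_eq_empty.1 hempty)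
      rw [this]
    · obtain ⟨f, hf, hbase1, hbase2⟩ := sym_exchange M hB'' hB' he
      have hef : ℓ e < ℓ f := hloc e (hD he) f hf.2 hbase1
      set B''' := insert e (B' \ {f}) with hB'''def
      have hwt : wt ℓ B''' = wt ℓ B' - ℓ f + ℓ e := wt_insert_diff ℓ hf.1 he.2
      have hdiff : B'' \ B''' = (B'' \ B') \ {e} := by
        ext x
        simp only [hB'''def, Set.mem_diff, Set.mem_insert_iff, Set.mem_singleton_iff]
        constructor
        · rintro ⟨hx, hx2⟩
          push_neg at hx2
          exact ⟨⟨hx, fun hxB' => hf.2 (by rw [← hx2.2 hxB']; exact hx)⟩, hx2.1⟩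
        · rintro ⟨⟨hx, hx2⟩, hxe⟩
          exact ⟨hx, by push_neg; exact ⟨hxe, fun h => absurd h hx2⟩⟩
      have hlt : ((B'' \ B') \ {e}).ncard < m := by
        rw [← hcard]
        exact Set.ncard_diff_singleton_lt_of_mem he (Set.toFinite _)
      have hlt2 : (B'' \ B''').ncard < m := by rw [hdiff]; exact hlt
      have := ih _ hlt2 B''' hbase2 rfl (by rw [hdiff]; exact diff_subset.trans hD)
      linarith

theorem broken_line_order_is_shelling {α : Type*} [Fintype α]
    (M : Matroid α) (hE : M.E = Set.univ)
    {n : ℕ} (B : Fin n → Set α) (hB : EnumeratesBases M B)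
    (hwit : ∀ i : Fin n, ∃ ℓ : α → ℝ, Generic M ℓ ∧
      ∀ j : Fin n, wt ℓ (B j) < wt ℓ (B i) ↔ j < i) :
    IsShelling B := by
  obtain ⟨hinj, hbase, hsurj⟩ := hB
  intro i j hij
  obtain ⟨ℓ, ⟨hℓinj, -⟩, hord⟩ := hwit j
  have hwlt : wt ℓ (B i) < wt ℓ (B j) := (hord i).2 hij
  -- find an improving exchange removing an element of B j \ B i
  have hkey : ∃ e ∈ B j \ B i, ∃ f, f ∉ B j ∧
      M.IsBase (insert f (B j \ {e})) ∧ ℓ f < ℓ e := by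
    by_contra hcon
    push_neg at hcon
    have hloc : ∀ e ∈ B j \ B i, ∀ f ∉ B j, M.IsBase (insert f ((B j) \ {e})) → ℓ e < ℓ f := by
      intro e he f hf hbase'
      have hfe : f ≠ e := fun h => hf (h ▸ he.1)
      exact lt_of_le_of_ne (hcon e he f hf hbase') (fun h => hfe (hℓinj h).symm)
    have := local_to_global M ℓ (hbase j) hloc ((B j \ B i).ncard) (B i) (hbase i) rfl
      Set.Subset.rfl
    linarith
  obtain ⟨e, he, f, hf, hbase', hlf⟩ := hkey
  obtain ⟨k, hk⟩ := hsurj _ hbase'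
  have hwtk : wt ℓ (B k) < wt ℓ (B j) := by
    rw [hk, wt_insert_diff ℓ he.1 hf]
    linarith
  refine ⟨k, (hord k).1 hwtk, ?_, ?_⟩
  · intro x hx
    refine ⟨?_, hx.2⟩
    rw [hk]
    right
    exact ⟨hx.2, fun h => he.2 (h ▸ hx.1)⟩
  · have hcap : B k ∩ B j = B j \ {e} := by
      rw [hk]
      ext x
      simp only [Set.mem_inter_iff, Set.mem_insert_iff, Set.mem_diff, Set.mem_singleton_iff]
      constructor
      · rintro ⟨h1 | h1, h2⟩
        · exact absurd (h1 ▸ h2) hf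
        · exact ⟨h2, h1.2⟩
      · rintro ⟨h1, h2⟩
        exact ⟨Or.inr ⟨h1, h2⟩, h1⟩
    rw [hcap, Set.ncard_diff_singleton_of_mem he.1]
end

section
/- Let Δ be a pure finite simplicial complex and let F₁, …, Fₙ be a shelling order of Δ. Let v be a vertex of Δ with v ∉ F₁, and let F_j be the first facet of the shelling containing v (i.e., v ∈ F_j and v ∉ F_i for all i < j). Then the restriction set of F_j is exactly {v}: R(F_j) = {v}. (Lemma 6.5 (lem:restrictionVertices).) -/
theorem restriction_set_of_first_facet_containing_vertex
    {α : Type*} {n : ℕ} (hn : 0 < n) (F : Fin n → Set α)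
    (hfin : ∀ i, (F i).Finite) (hinj : Function.Injective F)
    (r : ℕ) (hpure : ∀ i, (F i).ncard = r)
    (hshell : IsShelling F)
    (v : α) (hv : ∃ i : Fin n, v ∈ F i) (hv0 : v ∉ F ⟨0, hn⟩)
    (j : Fin n) (hj : v ∈ F j) (hjfirst : ∀ i : Fin n, i < j → v ∉ F i) :
    restrictionSet F j = {v} := by
  have hj0 : (⟨0, hn⟩ : Fin n) < j :=
    lt_of_le_of_ne (by simp [Fin.le_def]) (fun h => hv0 (h ▸ hj))
  obtain ⟨k, hk, hsub, hcard⟩ := hshell ⟨0, hn⟩ j hj0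
  have hvk : v ∉ F k := hjfirst k hk
  have hsub2 : F k ∩ F j ⊆ F j \ {v} := by
    rintro x ⟨hxk, hxj⟩
    refine ⟨hxj, fun hxv => hvk ?_⟩
    simp only [Set.mem_singleton_iff] at hxv
    exact hxv ▸ hxk
  have hcard2 : (F j \ {v}).ncard = r - 1 := by
    rw [Set.ncard_diff_singleton_of_mem hj, hpure j]
  have heq : F k ∩ F j = F j \ {v} :=
    Set.eq_of_subset_of_ncard_le hsub2
      (by rw [hcard, hcard2, hpure j]) ((hfin j).diff)
  ext x
  simp only [restrictionSet, Set.mem_setOf_eq, Set.mem_singleton_iff]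
  constructor
  · rintro ⟨hx, i, hi, hsubi⟩
    by_contra hxv
    exact hjfirst i hi (hsubi ⟨hj, by simpa using fun h => hxv h.symm⟩)
  · rintro rfl
    exact ⟨hj, k, hk, heq ▸ Set.inter_subset_left⟩
end

section
/- Let M be a matroid on a finite ground set E with a linear order < on E. If B and B' are bases of M with |IP_<(B)| < |IP_<(B')|, then there exist an element b ∈ IP_<(B') \ IP_<(B) and a basis B'' of M such that IP_<(B'') = IP_<(B) ∪ {b}. (Theorem 4.1.A (thm:Dawson-Chari A), after Dawson: the collection of internally passive sets has the greedoid exchange property.) -/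
namespace DawsonAux

open Set

variable {α : Type*} [Fintype α] [LinearOrder α]

/-- The greedy basis generated by a set `S`: process the elements in increasing
order, adding an element whenever it is not spanned by `S` together with all
smaller elements.  -/
def gb (M : Matroid α) (S : Set α) : Set α := S ∪ {e | e ∉ M.closure (S ∪ Set.Iio e)}

lemma subset_gb (M : Matroid α) (S : Set α) : S ⊆ gb M S := Set.subset_union_left

lemma mem_closure_of_not_mem_gb {M : Matroid α} {S : Set α} {e : α} (h : e ∉ gb M S) :
    e ∈ M.closure (S ∪ Set.Iio e) := by
  by_contra hc
  exact h (Or.inr hc)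

lemma strong_lt_induction (P : α → Prop) (ih : ∀ e, (∀ z, z < e → P z) → P e) : ∀ e, P e := by
  intro e
  induction e using WellFoundedLT.induction with
  | _ e h => exact ih e h

lemma exists_min_finset (Q : Finset α → Prop) (F0 : Finset α) (h0 : Q F0) :
    ∃ F, Q F ∧ ∀ G, Q G → F.card ≤ G.card := by
  classical
  have hex : ∃ n, ∃ F : Finset α, Q F ∧ F.card = n := ⟨F0.card, F0, h0, rfl⟩
  obtain ⟨F, hF, hcard⟩ := Nat.find_spec hex
  exact ⟨F, hF, fun G hG => by rw [hcard]; exact Nat.find_min' hex ⟨G, hG, rfl⟩⟩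

section WithGround

variable {M : Matroid α} (hE : M.E = Set.univ)

include hE

lemma sub_ground (X : Set α) : X ⊆ M.E := by rw [hE]; exact Set.subset_univ X

lemma mem_ground (x : α) : x ∈ M.E := by rw [hE]; exact Set.mem_univ x

lemma gb_indep {S : Set α} (hS : M.Indep S) : M.Indep (gb M S) := by
  classical
  have key : ∀ n (F : Finset α), F.card = n → ↑F ⊆ gb M S \ S → M.Indep (S ∪ ↑F) := by
    intro n
    induction n with
    | zero =>
      intro F hF _
      rw [Finset.card_eq_zero] at hF
      subst hF
      simpa using hS
    | succ n ihn =>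
      intro F hF hFsub
      have hne : F.Nonempty := Finset.card_pos.mp (by omega)
      set m := F.max' hne with hm
      have hmF : m ∈ F := F.max'_mem hne
      have hcard : (F.erase m).card = n := by
        rw [Finset.card_erase_of_mem hmF, hF]
        omega
      have hersub : (↑(F.erase m) : Set α) ⊆ gb M S \ S :=
        fun x hx => hFsub (Finset.mem_coe.mpr (Finset.mem_of_mem_erase (Finset.mem_coe.mp hx)))
      have hIH : M.Indep (S ∪ ↑(F.erase m)) := ihn _ hcard hersub
      have hmgb : m ∈ gb M S \ S := hFsub hmF
      have hmcl : m ∉ M.closure (S ∪ Set.Iio m) := by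
        rcases hmgb.1 with h | h
        · exact absurd h hmgb.2
        · exact h
      have hsub : (S ∪ ↑(F.erase m)) ⊆ S ∪ Set.Iio m := by
        refine Set.union_subset_union_right S ?_
        intro x hx
        obtain ⟨hxne, hxF⟩ := Finset.mem_erase.mp (Finset.mem_coe.mp hx)
        exact lt_of_le_of_ne (F.le_max' x hxF) hxne
      have hmnot : m ∉ M.closure (S ∪ ↑(F.erase m)) :=
        fun h => hmcl (M.closure_subset_closure hsub h)
      have hmmem : m ∉ S ∪ ↑(F.erase m) :=
        fun h => hmnot (M.subset_closure _ (sub_ground hE _) h)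
      have hins : M.Indep (insert m (S ∪ ↑(F.erase m))) := by
        rw [hIH.insert_indep_iff_of_notMem hmmem]
        exact ⟨mem_ground hE m, hmnot⟩
      have hFe : S ∪ (↑F : Set α) = insert m (S ∪ ↑(F.erase m)) := by
        rw [← Set.union_insert, ← Finset.coe_insert, Finset.insert_erase hmF]
      rw [hFe]
      exact hins
  have hfin : (gb M S \ S).Finite := Set.toFinite _
  have := key _ hfin.toFinset rfl (by rw [Set.Finite.coe_toFinset])
  rwa [Set.Finite.coe_toFinset, Set.union_diff_cancel (subset_gb M S)] at this

lemma gb_base {S : Set α} (hS : M.Indep S) : M.IsBase (gb M S) := by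
  refine (gb_indep hE hS).isBase_of_ground_subset_closure ?_
  have hall : ∀ e, e ∈ M.closure (gb M S) := by
    refine strong_lt_induction _ (fun e IH => ?_)
    by_cases he : e ∈ gb M S
    · exact M.subset_closure _ (sub_ground hE _) he
    · have h1 := mem_closure_of_not_mem_gb he
      have h2 : S ∪ Set.Iio e ⊆ M.closure (gb M S) :=
        Set.union_subset
          ((subset_gb M S).trans (M.subset_closure _ (sub_ground hE _)))
          (fun z hz => IH z hz)
      have := M.closure_subset_closure h2 h1
      rwa [M.closure_closure] at this
  intro e _
  exact hall e

lemma passive_iff {B : Set α} (hB : M.IsBase B) {a : α} (ha : a ∈ B) :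
    a ∈ IP M (· < ·) B ↔ a ∈ M.closure ((B \ {a}) ∪ Set.Iio a) := by
  constructor
  · rintro ⟨-, e, heB, hea, hbase⟩
    have h1 : a ∈ M.closure (insert e (B \ {a})) := by
      rw [hbase.closure_eq]
      exact mem_ground hE a
    exact M.closure_subset_closure
      (Set.insert_subset (Or.inr hea) Set.subset_union_left) h1
  · intro hcl
    have hBd : M.Indep (B \ {a}) := hB.indep.subset Set.diff_subset
    have hex : ∃ e, e < a ∧ e ∉ M.closure (B \ {a}) := by
      by_contra hc
      push_neg at hc
      have hsub : (B \ {a}) ∪ Set.Iio a ⊆ M.closure (B \ {a}) :=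
        Set.union_subset (M.subset_closure _ (sub_ground hE _)) (fun z hz => hc z hz)
      have := M.closure_subset_closure hsub hcl
      rw [M.closure_closure] at this
      exact hB.indep.notMem_closure_sdiff_of_mem ha this
    obtain ⟨e, hea, henotcl⟩ := hex
    have heB : e ∉ B := by
      intro h
      exact henotcl (M.subset_closure _ (sub_ground hE _) ⟨h, fun hh => absurd hea (by
        rw [Set.mem_singleton_iff] at hh; rw [hh]; exact lt_irrefl a)⟩)
    have heBa : e ∉ B \ {a} := fun h => heB h.1
    have hind : M.Indep (insert e (B \ {a})) := by
      rw [hBd.insert_indep_iff_of_notMem heBa]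
      exact ⟨mem_ground hE e, henotcl⟩
    exact ⟨ha, e, heB, hea, hB.exchange_isBase_of_indep heB hind⟩

lemma gb_IP {B : Set α} (hB : M.IsBase B) : gb M (IP M (· < ·) B) = B := by
  classical
  set A := IP M (· < ·) B with hA
  have hAB : A ⊆ B := fun x hx => hx.1
  have hsub : gb M A ⊆ B := by
    intro e he
    by_contra heB
    have heA : e ∉ A := fun h => heB (hAB h)
    have h2 : e ∉ M.closure (A ∪ Set.Iio e) := by
      rcases he with h | h
      · exact absurd h heA
      · exact h
    obtain ⟨Y, ⟨hYB, hYcl⟩, hYmin⟩ :=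
      exists_min_finset (fun F : Finset α => ↑F ⊆ B ∧ e ∈ M.closure ↑F)
        (Set.toFinite B).toFinset
        ⟨by rw [Set.Finite.coe_toFinset], by
          rw [Set.Finite.coe_toFinset, hB.closure_eq]
          exact mem_ground hE e⟩
    have hx : ∃ x ∈ Y, x ∉ A ∪ Set.Iio e := by
      by_contra hc
      push_neg at hc
      exact h2 (M.closure_subset_closure (fun z hz => hc z (Finset.mem_coe.mp hz)) hYcl)
    obtain ⟨x, hxY, hxnot⟩ := hx
    have hxB : x ∈ B := hYB (Finset.mem_coe.mpr hxY)
    have hxne : x ≠ e := fun h => heB (h ▸ hxB)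
    have hex : e < x := by
      rcases lt_trichotomy x e with h | h | h
      · exact absurd (Or.inr h) hxnot
      · exact absurd h hxne
      · exact h
    have hxA : x ∉ A := fun h => hxnot (Or.inl h)
    have hemin : e ∉ M.closure ↑(Y.erase x) := by
      intro hcon
      have h1 := hYmin (Y.erase x)
        ⟨fun z hz => hYB (Finset.mem_coe.mpr
          (Finset.mem_of_mem_erase (Finset.mem_coe.mp hz))), hcon⟩
      have h2 := Finset.card_erase_lt_of_mem hxY
      omega
    have hYins : (↑Y : Set α) = insert x ↑(Y.erase x) := by
      rw [← Finset.coe_insert, Finset.insert_erase hxY]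
    have hxcl : x ∈ M.closure (insert e ↑(Y.erase x)) :=
      Matroid.mem_closure_insert hemin (by rw [← hYins]; exact hYcl)
    have henotclBx : e ∉ M.closure (B \ {x}) := by
      intro hecl
      have hsub2 : insert e (↑(Y.erase x) : Set α) ⊆ M.closure (B \ {x}) := by
        refine Set.insert_subset hecl ?_
        intro z hz
        obtain ⟨hzne, hzY⟩ := Finset.mem_erase.mp (Finset.mem_coe.mp hz)
        exact M.subset_closure _ (sub_ground hE _) ⟨hYB (Finset.mem_coe.mpr hzY), hzne⟩
      have := M.closure_subset_closure hsub2 hxcl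
      rw [M.closure_closure] at this
      exact hB.indep.notMem_closure_sdiff_of_mem hxB this
    have heBx : e ∉ B \ {x} := fun h => heB h.1
    have hind : M.Indep (insert e (B \ {x})) := by
      rw [(hB.indep.subset Set.diff_subset).insert_indep_iff_of_notMem heBx]
      exact ⟨mem_ground hE e, henotclBx⟩
    exact hxA ⟨hxB, e, heB, hex, hB.exchange_isBase_of_indep heB hind⟩
  exact (gb_base hE (hB.indep.subset hAB)).eq_of_subset_isBase hB hsub

lemma gb_not_passive {S : Set α} (hS : M.Indep S) {x : α}
    (hx : x ∈ gb M S) (hxS : x ∉ S) : x ∉ IP M (· < ·) (gb M S) := by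
  have hclaim : ∀ z, z < x → z ∈ M.closure (gb M S \ {x}) := by
    refine strong_lt_induction (fun z => z < x → z ∈ M.closure (gb M S \ {x}))
      (fun z IH hzx => ?_)
    by_cases hz : z ∈ gb M S
    · exact M.subset_closure _ (sub_ground hE _) ⟨hz, by
        rw [Set.mem_singleton_iff]; exact ne_of_lt hzx⟩
    · have h1 := mem_closure_of_not_mem_gb hz
      have h2 : S ∪ Set.Iio z ⊆ M.closure (gb M S \ {x}) := by
        refine Set.union_subset ?_ (fun w hw => IH w hw (lt_trans hw hzx))
        intro s hs
        exact M.subset_closure _ (sub_ground hE _)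
          ⟨subset_gb M S hs, by rw [Set.mem_singleton_iff]; exact fun h => hxS (h ▸ hs)⟩
      have := M.closure_subset_closure h2 h1
      rwa [M.closure_closure] at this
  rintro ⟨hxmem, e, heB, hex, hbase⟩
  have hecl : e ∈ M.closure (gb M S \ {x}) := hclaim e hex
  have hind := hbase.indep
  have heBx : e ∉ gb M S \ {x} := fun h => heB h.1
  rw [((gb_indep hE hS).subset Set.diff_subset).insert_indep_iff_of_notMem heBx] at hind
  exact hind.2 hecl

lemma exists_good_b {B B' : Set α} (hB : M.IsBase B) (hB' : M.IsBase B')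
    (hcard : (IP M (· < ·) B).ncard < (IP M (· < ·) B').ncard) :
    ∃ b ∈ IP M (· < ·) B', b ∉ M.closure (IP M (· < ·) B) ∧ b ∉ B := by
  classical
  set A := IP M (· < ·) B with hA
  set A' := IP M (· < ·) B' with hA'
  have hAB : A ⊆ B := fun x hx => hx.1
  have hA'B' : A' ⊆ B' := fun x hx => hx.1
  have hAi : M.Indep A := hB.indep.subset hAB
  have hA'i : M.Indep A' := hB'.indep.subset hA'B'
  have hU : (A' \ M.closure A).Nonempty := by
    obtain ⟨b, hbmem, hbind⟩ := hAi.augment hA'i (by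
      rw [← (Set.toFinite A).cast_ncard_eq, ← (Set.toFinite A').cast_ncard_eq]
      exact_mod_cast hcard)
    refine ⟨b, hbmem.1, ?_⟩
    intro hcl
    rw [hAi.insert_indep_iff_of_notMem hbmem.2] at hbind
    exact hbind.2 hcl
  by_cases hUB : ∃ u ∈ A' \ M.closure A, u ∉ B
  · obtain ⟨u, hu, huB⟩ := hUB
    exact ⟨u, hu.1, hu.2, huB⟩
  push_neg at hUB
  exfalso
  set U := A' \ M.closure A with hUdef
  have hUfin : U.Finite := Set.toFinite _
  obtain ⟨u0, hu0U⟩ := hU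
  have huFne : hUfin.toFinset.Nonempty := ⟨u0, hUfin.mem_toFinset.mpr hu0U⟩
  set u := hUfin.toFinset.max' huFne with hu
  have huU : u ∈ U := hUfin.mem_toFinset.mp (hUfin.toFinset.max'_mem huFne)
  have humax : ∀ v ∈ U, v ≤ u := fun v hv =>
    hUfin.toFinset.le_max' v (hUfin.mem_toFinset.mpr hv)
  have huA' : u ∈ A' := huU.1
  have hucl : u ∉ M.closure A := huU.2
  have huA : u ∉ A := fun h => hucl (M.subset_closure A (sub_ground hE _) h)
  have huB : u ∈ B := hUB u huU
  have huB' : u ∈ B' := hA'B' huA'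
  have hnotZ : u ∉ M.closure ((B \ {u}) ∪ Set.Iio u) :=
    fun h => huA ((passive_iff hE hB huB).mpr h)
  have hZ' : u ∈ M.closure ((B' \ {u}) ∪ Set.Iio u) := (passive_iff hE hB' huB').mp huA'
  obtain ⟨Y, ⟨hYsub, hYcl⟩, hYmin⟩ := exists_min_finset
    (fun F : Finset α => ↑F ⊆ (B' \ {u}) ∪ Set.Iio u ∧ u ∈ M.closure ↑F)
    (Set.toFinite ((B' \ {u}) ∪ Set.Iio u)).toFinset
    ⟨by rw [Set.Finite.coe_toFinset], by rwa [Set.Finite.coe_toFinset]⟩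
  have hYZ : (↑Y : Set α) ⊆ M.closure ((B \ {u}) ∪ Set.Iio u) := by
    intro w hwY
    by_cases hwu : w < u
    · exact M.subset_closure _ (sub_ground hE _) (Or.inr hwu)
    have hwB' : w ∈ B' \ {u} := by
      rcases hYsub hwY with h | h
      · exact h
      · exact absurd h hwu
    have hwne : w ≠ u := fun h => hwB'.2 (Set.mem_singleton_iff.mpr h)
    have huw : u < w := lt_of_le_of_ne (not_lt.mp hwu) (Ne.symm hwne)
    by_cases hwA' : w ∈ A'
    · have hwclA : w ∈ M.closure A := by
        by_contra hc
        exact absurd (humax w ⟨hwA', hc⟩) (not_le.mpr huw)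
      have hAsub : A ⊆ (B \ {u}) ∪ Set.Iio u := fun z hz =>
        Or.inl ⟨hAB hz, by rw [Set.mem_singleton_iff]; exact fun h => huA (h ▸ hz)⟩
      exact M.closure_subset_closure hAsub hwclA
    · exfalso
      have hwY' : w ∈ Y := Finset.mem_coe.mp hwY
      have humin : u ∉ M.closure ↑(Y.erase w) := by
        intro hcon
        have h1 := hYmin (Y.erase w)
          ⟨fun z hz => hYsub (Finset.mem_coe.mpr
            (Finset.mem_of_mem_erase (Finset.mem_coe.mp hz))), hcon⟩
        have h2 := Finset.card_erase_lt_of_mem hwY'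
        omega
      have hYins : (↑Y : Set α) = insert w ↑(Y.erase w) := by
        rw [← Finset.coe_insert, Finset.insert_erase hwY']
      have hwcl : w ∈ M.closure (insert u ↑(Y.erase w)) :=
        Matroid.mem_closure_insert humin (by rw [← hYins]; exact hYcl)
      have hsub3 : insert u (↑(Y.erase w) : Set α) ⊆ (B' \ {w}) ∪ Set.Iio w := by
        refine Set.insert_subset
          (Or.inl ⟨huB', by rw [Set.mem_singleton_iff]; exact fun h => hwne h.symm⟩) ?_
        intro v hv
        obtain ⟨hvne, hvY⟩ := Finset.mem_erase.mp (Finset.mem_coe.mp hv)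
        rcases hYsub (Finset.mem_coe.mpr hvY) with h | h
        · exact Or.inl ⟨h.1, by rw [Set.mem_singleton_iff]; exact hvne⟩
        · exact Or.inr (lt_trans h huw)
      have hwIP : w ∈ IP M (· < ·) B' :=
        (passive_iff hE hB' hwB'.1).mpr (M.closure_subset_closure hsub3 hwcl)
      exact hwA' hwIP
  have := M.closure_subset_closure hYZ hYcl
  rw [M.closure_closure] at this
  exact hnotZ this

end WithGround

end DawsonAux

open DawsonAux Set in
theorem IP_greedoid_exchange {α : Type*} [Fintype α] [LinearOrder α]
    (M : Matroid α) (hE : M.E = Set.univ)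
    (B B' : Set α) (hB : M.IsBase B) (hB' : M.IsBase B')
    (hcard : (IP M (· < ·) B).ncard < (IP M (· < ·) B').ncard) :
    ∃ b ∈ IP M (· < ·) B' \ IP M (· < ·) B, ∃ B'' : Set α, M.IsBase B'' ∧
      IP M (· < ·) B'' = insert b (IP M (· < ·) B) := by
  classical
  obtain ⟨b, hbA', hbclA, hbB⟩ := exists_good_b hE hB hB' hcard
  set A := IP M (· < ·) B with hAdef
  have hAB : A ⊆ B := fun x hx => hx.1
  have hAi : M.Indep A := hB.indep.subset hAB
  have hbA : b ∉ A := fun h => hbclA (M.subset_closure A (sub_ground hE _) h)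
  have hSind : M.Indep (insert b A) := by
    rw [hAi.insert_indep_iff_of_notMem hbA]
    exact ⟨mem_ground hE b, hbclA⟩
  set B2 := gb M (insert b A) with hB2def
  have hB2 : M.IsBase B2 := gb_base hE hSind
  have hgbA : gb M A = B := gb_IP hE hB
  have hbB2 : b ∈ B2 := subset_gb _ _ (Set.mem_insert b A)
  have hAB2 : A ⊆ B2 := (Set.subset_insert b A).trans (subset_gb _ _)
  have hsub : B2 \ {b} ⊆ B := by
    rintro x ⟨hxB2, hxb⟩
    have hxb' : x ≠ b := fun h => hxb (Set.mem_singleton_iff.mpr h)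
    rcases hxB2 with hxS | hxcl
    · rcases hxS with rfl | hxA
      · exact absurd rfl hxb'
      · exact hAB hxA
    · have hxA : x ∉ M.closure (A ∪ Set.Iio x) := by
        intro h
        refine hxcl (M.closure_subset_closure ?_ h)
        exact Set.union_subset_union_left _ (Set.subset_insert b A)
      rw [← hgbA]
      exact Or.inr hxA
  have hkey : ∀ x ∈ B, x ∉ B2 → x < b := by
    intro x hxB hxB2
    have hxb : x ≠ b := fun h => hbB (h ▸ hxB)
    by_contra hnot
    have hbx : b < x := lt_of_le_of_ne (not_lt.mp hnot) (Ne.symm hxb)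
    rw [← hgbA] at hxB
    rcases hxB with hxA | hxcl
    · exact hxB2 (hAB2 hxA)
    · refine hxB2 (Or.inr ?_)
      intro h
      refine hxcl (M.closure_subset_closure ?_ h)
      rintro z (hz | hz)
      · rcases hz with rfl | hz2
        · exact Or.inr hbx
        · exact Or.inl hz2
      · exact Or.inr hz
  have hcard2 : B2.encard = B.encard := hB2.encard_eq_encard_of_isBase hB
  have hdecomp : B = (B2 \ {b}) ∪ (B \ B2) := by
    ext x
    constructor
    · intro hx
      by_cases hxB2 : x ∈ B2
      · exact Or.inl ⟨hxB2, fun h => hbB (Set.mem_singleton_iff.mp h ▸ hx)⟩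
      · exact Or.inr ⟨hx, hxB2⟩
    · rintro (h | h)
      · exact hsub h
      · exact h.1
  have hdisj : Disjoint (B2 \ {b}) (B \ B2) := by
    rw [Set.disjoint_left]
    rintro x ⟨hx1, -⟩ ⟨-, hx2⟩
    exact hx2 hx1
  have h1 : (B2 \ {b}).encard + 1 = B2.encard := Set.encard_diff_singleton_add_one hbB2
  have hBcard : B.encard = (B2 \ {b}).encard + (B \ B2).encard := by
    nth_rewrite 1 [hdecomp]
    exact Set.encard_union_eq hdisj
  have hone : (B \ B2).encard = 1 := by
    have hfin : (B2 \ {b}).encard ≠ ⊤ := (Set.toFinite _).encard_lt_top.ne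
    have : (B2 \ {b}).encard + (B \ B2).encard = (B2 \ {b}).encard + 1 := by
      rw [← hBcard, ← hcard2, ← h1]
    exact WithTop.add_left_cancel hfin this
  obtain ⟨y, hy⟩ := Set.encard_eq_one.mp hone
  have hymem : y ∈ B \ B2 := by rw [hy]; exact Set.mem_singleton y
  have hyB : y ∈ B := hymem.1
  have hyB2 : y ∉ B2 := hymem.2
  have hyA : y ∉ A := fun h => hyB2 (hAB2 h)
  have hylt : y < b := hkey y hyB hyB2
  have hB2b : B2 \ {b} = B \ {y} := by
    apply Set.Subset.antisymm
    · intro x hx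
      refine ⟨hsub hx, ?_⟩
      rw [Set.mem_singleton_iff]
      rintro rfl
      exact hyB2 hx.1
    · rintro x ⟨hxB, hxy⟩
      have hxB2 : x ∈ B2 := by
        by_contra hc
        have : x ∈ B \ B2 := ⟨hxB, hc⟩
        rw [hy] at this
        exact hxy this
      refine ⟨hxB2, ?_⟩
      rw [Set.mem_singleton_iff]
      rintro rfl
      exact hbB hxB
  have hB2eq : B2 = insert b (B \ {y}) := by
    rw [← hB2b, Set.insert_diff_singleton, Set.insert_eq_of_mem hbB2]
  refine ⟨b, ⟨hbA', hbA⟩, B2, hB2, ?_⟩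
  apply Set.Subset.antisymm
  · intro x hx
    by_contra hxnot
    exact gb_not_passive hE hSind hx.1 hxnot hx
  · intro x hx
    rcases Set.mem_insert_iff.mp hx with hxb | hxA
    · -- b is internally passive in B2, witnessed by y
      rw [hxb]
      refine ⟨hbB2, y, hyB2, hylt, ?_⟩
      have hrw : insert y (B2 \ {b}) = B := by
        rw [hB2b, Set.insert_diff_singleton, Set.insert_eq_of_mem hyB]
      rw [hrw]
      exact hB
    · -- each a ∈ A remains internally passive in B2
      obtain ⟨haB, e, heB, hea, hbase⟩ := hxA
      have haA : x ∈ A := ⟨haB, e, heB, hea, hbase⟩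
      have haB2 : x ∈ B2 := hAB2 haA
      by_contra hnot
      have hP : Set.Iio x ⊆ M.closure (B2 \ {x}) := by
        intro z hz
        by_cases hzB2 : z ∈ B2
        · exact M.subset_closure _ (sub_ground hE _) ⟨hzB2, by
            rw [Set.mem_singleton_iff]; exact ne_of_lt hz⟩
        · by_contra hzcl
          have hzBx : z ∉ B2 \ {x} := fun h => hzB2 h.1
          have hind : M.Indep (insert z (B2 \ {x})) := by
            rw [(hB2.indep.subset Set.diff_subset).insert_indep_iff_of_notMem hzBx]
            exact ⟨mem_ground hE z, hzcl⟩
          exact hnot ⟨haB2, z, hzB2, hz, hB2.exchange_isBase_of_indep hzB2 hind⟩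
      have hba : b ≠ x := fun h => hbB (h ▸ haB)
      have hya : y ≠ x := fun h => hyA (h ▸ haA)
      have hB2a : B2 \ {x} = insert b ((B \ {y}) \ {x}) := by
        rw [hB2eq, ← Set.insert_diff_singleton_comm hba]
      set W := (B \ {y}) \ {x} with hW
      have hWBa : W ⊆ B \ {x} := fun z hz => ⟨hz.1.1, hz.2⟩
      have heBa : e ∉ B \ {x} := fun h => heB h.1
      have hecl0 : e ∉ M.closure (B \ {x}) := by
        have hi := hbase.indep
        rw [(hB.indep.subset Set.diff_subset).insert_indep_iff_of_notMem heBa] at hi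
        exact hi.2
      have heH : e ∈ M.closure (insert b W) := by
        have h := hP hea
        rwa [hB2a] at h
      have heW : e ∉ M.closure W := fun h => hecl0 (M.closure_subset_closure hWBa h)
      have hbcl : b ∈ M.closure (insert e W) := Matroid.mem_closure_insert heW heH
      rcases hya.lt_or_gt with hyalt | hyagt
      · -- case y < x
        have hyH : y ∈ M.closure (insert b W) := by
          have h := hP (show y ∈ Set.Iio x from hyalt)
          rwa [hB2a] at h
        have hyBx : y ∈ B \ {x} := ⟨hyB, by rw [Set.mem_singleton_iff]; exact hya⟩
        have hWyx : W = (B \ {x}) \ {y} := by rw [hW, Set.diff_diff_comm]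
        have hyW : y ∉ M.closure W := by
          rw [hWyx]
          exact (hB.indep.subset Set.diff_subset).notMem_closure_sdiff_of_mem hyBx
        have hins : insert y W = B \ {x} := by
          rw [hWyx, Set.insert_diff_singleton, Set.insert_eq_of_mem hyBx]
        have hbclBa : b ∈ M.closure (B \ {x}) := by
          have h2 : b ∈ M.closure (insert y W) := Matroid.mem_closure_insert hyW hyH
          rwa [hins] at h2
        have hsub5 : insert b W ⊆ M.closure (B \ {x}) := by
          refine Set.insert_subset hbclBa ?_
          intro z hz
          exact M.subset_closure _ (sub_ground hE _) (hWBa hz)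
        have := M.closure_subset_closure hsub5 heH
        rw [M.closure_closure] at this
        exact hecl0 this
      · -- case x < y
        have hclaim1 : Set.Iio y ⊆ M.closure (B \ {y}) := by
          intro z hz
          by_cases hzB : z ∈ B
          · exact M.subset_closure _ (sub_ground hE _) ⟨hzB, by
              rw [Set.mem_singleton_iff]; exact ne_of_lt hz⟩
          · by_contra hzcl
            have hzBy : z ∉ B \ {y} := fun h => hzB h.1
            have hind : M.Indep (insert z (B \ {y})) := by
              rw [(hB.indep.subset Set.diff_subset).insert_indep_iff_of_notMem hzBy]
              exact ⟨mem_ground hE z, hzcl⟩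
            exact hyA ⟨hyB, z, hzB, hz, hB.exchange_isBase_of_indep hzB hind⟩
        have heBy : e ∈ M.closure (B \ {y}) := hclaim1 (lt_trans hea hyagt)
        have hbBy : b ∈ M.closure (B \ {y}) := by
          have hsub6 : insert e W ⊆ M.closure (B \ {y}) := by
            refine Set.insert_subset heBy ?_
            intro z hz
            exact M.subset_closure _ (sub_ground hE _) hz.1
          have := M.closure_subset_closure hsub6 hbcl
          rwa [M.closure_closure] at this
        have hycl : y ∈ M.closure (insert b A ∪ Set.Iio y) :=
          mem_closure_of_not_mem_gb (show y ∉ gb M (insert b A) from hyB2)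
        have hsub4 : insert b A ∪ Set.Iio y ⊆ M.closure (B \ {y}) := by
          refine Set.union_subset (Set.insert_subset hbBy ?_) hclaim1
          intro z hz
          exact M.subset_closure _ (sub_ground hE _)
            ⟨hAB hz, by rw [Set.mem_singleton_iff]; exact fun h => hyA (h ▸ hz)⟩
        have := M.closure_subset_closure hsub4 hycl
        rw [M.closure_closure] at this
        exact hB.indep.notMem_closure_sdiff_of_mem hyB this
end
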